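/- arXiv:1209.6613 — 6 statements merged into one kernel-verified Lean document; each statement's English description precedes it below -/
import Mathlib

section
/- Suppose μ = 0. Then Z₀ is a first integral of L: Z₀ ∈ C^∞(ℝ²∖{0}; ℂ), A·∂Z₀/∂x + B·∂Z₀/∂y = 0 at every point of ℝ²∖{0}, the differential dZ₀ vanishes nowhere on ℝ²∖{0}, and the range of Z₀ on ℝ² (with Z₀(0) = 0) is exactly the closed upper half-plane {z ∈ ℂ : Im z ≥ 0}. -/
open Real Complex Set

set_option maxHeartbeats 1000000 in
/-- Suppose μ = 0.  Then Z₀ is a first integral of L: it is C^∞ on ℝ²∖{0},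
annihilated by L there, has nowhere vanishing differential on ℝ²∖{0}, and its
range is exactly the closed upper half-plane. -/
theorem stmt_1
    (A B : ℝ × ℝ → ℂ) (lam : ℂ)
    (hA : ContDiffOn ℝ (⊤ : ℕ∞) A {z : ℝ × ℝ | z ≠ 0})
    (hB : ContDiffOn ℝ (⊤ : ℕ∞) B {z : ℝ × ℝ | z ≠ 0})
    (hlam : 1 < lam.re)
    (hAh : ∀ t : ℝ, 0 < t → ∀ z : ℝ × ℝ, A (t • z) = (t : ℂ) ^ lam * A z)
    (hBh : ∀ t : ℝ, 0 < t → ∀ z : ℝ × ℝ, B (t • z) = (t : ℂ) ^ lam * B z)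
    (a b p q : ℝ → ℂ)
    (ha : ∀ θ : ℝ, a θ = A (Real.cos θ, Real.sin θ))
    (hb : ∀ θ : ℝ, b θ = B (Real.cos θ, Real.sin θ))
    (hpdef : ∀ θ : ℝ, p θ = b θ * (Real.cos θ : ℂ) - a θ * (Real.sin θ : ℂ))
    (hqdef : ∀ θ : ℝ, q θ = Complex.I * (a θ * (Real.cos θ : ℂ) + b θ * (Real.sin θ : ℂ)))
    (hC1 : interior {θ : ℝ | (q θ * (starRingEnd ℂ) (p θ)).re = 0} = ∅)
    (hC2 : ∀ θ : ℝ, p θ ≠ 0)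
    (mu : ℂ)
    (hmudef : mu = (1 / (2 * Real.pi)) * ∫ θ in (0:ℝ)..(2 * Real.pi), q θ / p θ)
    (hmu0 : mu = 0)
    (psi : ℝ → ℂ) (hpsi0 : psi 0 = 0)
    (hpsider : ∀ θ : ℝ, HasDerivAt psi (q θ / p θ) θ)
    (maxm minm : ℝ)
    (hmaxm : maxm = sSup ((fun θ => (psi θ).re) '' Set.Icc (0:ℝ) (2 * Real.pi)))
    (hminm : minm = sInf ((fun θ => (psi θ).re) '' Set.Icc (0:ℝ) (2 * Real.pi)))
    (sigma : ℝ) (hsigma : sigma = Real.pi / (maxm - minm))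
    (phi : ℝ → ℂ) (hphidef : ∀ θ : ℝ, phi θ = (sigma : ℂ) * psi θ - ((sigma * minm : ℝ) : ℂ))
    (Z : ℝ × ℝ → ℂ) (hZzero : Z 0 = 0)
    (hZ : ∀ r θ : ℝ, 0 < r → Z (r * Real.cos θ, r * Real.sin θ) =
      ((r ^ sigma : ℝ) : ℂ) * Complex.exp (Complex.I * phi θ)) :
    ContDiffOn ℝ (⊤ : ℕ∞) Z {z : ℝ × ℝ | z ≠ 0} ∧
    (∀ z : ℝ × ℝ, z ≠ 0 →
      A z * fderiv ℝ Z z (1, 0) + B z * fderiv ℝ Z z (0, 1) = 0) ∧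
    (∀ z : ℝ × ℝ, z ≠ 0 → fderiv ℝ Z z ≠ 0) ∧
    Set.range Z = {w : ℂ | 0 ≤ w.im} := by
  ---------------------------------------------------------------------------
  -- Step 0 : smoothness of a, b, p, q, q/p, psi, phi
  ---------------------------------------------------------------------------
  have hopen : IsOpen {z : ℝ × ℝ | z ≠ 0} := isOpen_ne
  have hcircle_ne : ∀ θ : ℝ, ((Real.cos θ, Real.sin θ) : ℝ × ℝ) ≠ 0 := by
    intro θ h
    have h1 : Real.cos θ = 0 := congrArg Prod.fst h
    have h2 : Real.sin θ = 0 := congrArg Prod.snd h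
    have := Real.sin_sq_add_cos_sq θ
    rw [h1, h2] at this; norm_num at this
  have hac : ContDiff ℝ (⊤:ℕ∞) a := by
    rw [contDiff_iff_contDiffAt]
    intro θ
    have hAat : ContDiffAt ℝ (⊤ : ℕ∞) A (Real.cos θ, Real.sin θ) :=
      hA.contDiffAt (hopen.mem_nhds (hcircle_ne θ))
    have : ContDiffAt ℝ (⊤ : ℕ∞) (fun θ : ℝ => A (Real.cos θ, Real.sin θ)) θ :=
      hAat.comp θ ((Real.contDiff_cos.prodMk Real.contDiff_sin).contDiffAt)
    exact this.congr_of_eventuallyEq (Filter.Eventually.of_forall fun x => ha x)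
  have hbc : ContDiff ℝ (⊤:ℕ∞) b := by
    rw [contDiff_iff_contDiffAt]
    intro θ
    have hBat : ContDiffAt ℝ (⊤ : ℕ∞) B (Real.cos θ, Real.sin θ) :=
      hB.contDiffAt (hopen.mem_nhds (hcircle_ne θ))
    have : ContDiffAt ℝ (⊤ : ℕ∞) (fun θ : ℝ => B (Real.cos θ, Real.sin θ)) θ :=
      hBat.comp θ ((Real.contDiff_cos.prodMk Real.contDiff_sin).contDiffAt)
    exact this.congr_of_eventuallyEq (Filter.Eventually.of_forall fun x => hb x)
  have hcosC : ContDiff ℝ (⊤:ℕ∞) (fun θ : ℝ => ((Real.cos θ : ℂ))) :=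
    Complex.ofRealCLM.contDiff.comp Real.contDiff_cos
  have hsinC : ContDiff ℝ (⊤:ℕ∞) (fun θ : ℝ => ((Real.sin θ : ℂ))) :=
    Complex.ofRealCLM.contDiff.comp Real.contDiff_sin
  have hpc : ContDiff ℝ (⊤:ℕ∞) p := by
    have hpe : p = fun θ => b θ * (Real.cos θ : ℂ) - a θ * (Real.sin θ : ℂ) := funext hpdef
    rw [hpe]; exact (hbc.mul hcosC).sub (hac.mul hsinC)
  have hqc : ContDiff ℝ (⊤:ℕ∞) q := by
    have hqe : q = fun θ => Complex.I * (a θ * (Real.cos θ : ℂ) + b θ * (Real.sin θ : ℂ)) :=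
      funext hqdef
    rw [hqe]; exact contDiff_const.mul ((hac.mul hcosC).add (hbc.mul hsinC))
  have hqp : ContDiff ℝ (⊤:ℕ∞) (fun θ => q θ / p θ) := by
    simp only [div_eq_mul_inv]; exact hqc.mul (hpc.inv hC2)
  have hpsic : ContDiff ℝ (⊤:ℕ∞) psi := by
    rw [contDiff_infty_iff_deriv]
    constructor
    · exact fun θ => (hpsider θ).differentiableAt
    · have : deriv psi = fun θ => q θ / p θ := funext fun θ => (hpsider θ).deriv
      rw [this]; exact hqp
  have hphie : phi = fun θ => (sigma : ℂ) * psi θ - ((sigma * minm : ℝ) : ℂ) := funext hphidef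
  have hphic : ContDiff ℝ (⊤:ℕ∞) phi := by
    rw [hphie]; exact (contDiff_const.mul hpsic).sub contDiff_const
  ---------------------------------------------------------------------------
  -- Step 1 : periodicity of psi and bounds minm ≤ Re psi ≤ maxm, minm < maxm
  ---------------------------------------------------------------------------
  have h2pi : (0:ℝ) < 2 * Real.pi := by positivity
  have hap : ∀ θ, a (θ + 2*Real.pi) = a θ := by
    intro θ; rw [ha, ha, Real.cos_add_two_pi, Real.sin_add_two_pi]
  have hbp : ∀ θ, b (θ + 2*Real.pi) = b θ := by
    intro θ; rw [hb, hb, Real.cos_add_two_pi, Real.sin_add_two_pi]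
  have hqpper : ∀ θ, q (θ + 2*Real.pi) / p (θ + 2*Real.pi) = q θ / p θ := by
    intro θ
    rw [hpdef, hqdef, hpdef, hqdef, hap, hbp, Real.cos_add_two_pi, Real.sin_add_two_pi]
  have hint : (∫ θ in (0:ℝ)..(2 * Real.pi), q θ / p θ) = psi (2*Real.pi) - psi 0 :=
    intervalIntegral.integral_eq_sub_of_hasDerivAt (fun x _ => hpsider x)
      (hqp.continuous.intervalIntegrable 0 (2*Real.pi))
  have hint0 : (∫ θ in (0:ℝ)..(2 * Real.pi), q θ / p θ) = 0 := by
    have := hmu0 ▸ hmudef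
    field_simp at this
    have h2 : ((2 * Real.pi : ℝ) : ℂ) ≠ 0 := by
      simp [Real.pi_ne_zero]
    simpa using this.symm
  have hpsi2pi : psi (2*Real.pi) = 0 := by
    have := hint.symm.trans hint0
    rw [hpsi0, sub_zero] at this; exact this
  have hpsiper : ∀ θ, psi (θ + 2*Real.pi) = psi θ := by
    intro θ
    have hg : ∀ x : ℝ, HasDerivAt (fun s => psi (s + 2*Real.pi) - psi s) 0 x := by
      intro x
      have h1 : HasDerivAt (fun s : ℝ => psi (s + 2*Real.pi)) (q x / p x) x := by
        have := HasDerivAt.comp_add_const x (2*Real.pi) (hpsider (x + 2*Real.pi))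
        rwa [hqpper x] at this
      have := h1.sub (hpsider x); rw [sub_self] at this; exact this
    have hconst : ∀ x y : ℝ, (fun s => psi (s + 2*Real.pi) - psi s) x
        = (fun s => psi (s + 2*Real.pi) - psi s) y := by
      intro x y
      exact is_const_of_deriv_eq_zero (fun s => (hg s).differentiableAt)
        (fun s => (hg s).deriv) x y
    have := hconst θ 0
    simp only [zero_add, hpsi0, sub_zero, hpsi2pi] at this
    exact sub_eq_zero.mp this
  have hrecont : Continuous fun θ => (psi θ).re :=
    Complex.continuous_re.comp hpsic.continuous
  have hcpt : IsCompact (Set.Icc (0:ℝ) (2*Real.pi)) := isCompact_Icc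
  have himc : IsCompact ((fun θ => (psi θ).re) '' Set.Icc (0:ℝ) (2*Real.pi)) :=
    hcpt.image_of_continuousOn hrecont.continuousOn
  have hbddA : BddAbove ((fun θ => (psi θ).re) '' Set.Icc (0:ℝ) (2*Real.pi)) := himc.bddAbove
  have hbddB : BddBelow ((fun θ => (psi θ).re) '' Set.Icc (0:ℝ) (2*Real.pi)) := himc.bddBelow
  have hperre : Function.Periodic (fun θ => (psi θ).re) (2*Real.pi) :=
    fun θ => congrArg Complex.re (hpsiper θ)
  have hall : ∀ θ, minm ≤ (psi θ).re ∧ (psi θ).re ≤ maxm := by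
    intro θ
    obtain ⟨y, hy, hfy⟩ := hperre.exists_mem_Ico h2pi θ 0
    have hyIcc : y ∈ Set.Icc (0:ℝ) (2*Real.pi) := ⟨hy.1, by linarith [hy.2.le, hy.2]⟩
    have hmem : (psi y).re ∈ (fun θ => (psi θ).re) '' Set.Icc (0:ℝ) (2*Real.pi) :=
      ⟨y, hyIcc, rfl⟩
    rw [hfy]
    exact ⟨hminm ▸ csInf_le hbddB hmem, hmaxm ▸ le_csSup hbddA hmem⟩
  have hlt : minm < maxm := by
    by_contra hcon
    push_neg at hcon
    have hconstv : ∀ θ, (psi θ).re = minm := fun θ =>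
      le_antisymm (le_trans (hall θ).2 hcon) (hall θ).1
    have hzero : ∀ θ, ((q θ / p θ)).re = 0 := by
      intro θ
      have hre : HasDerivAt (fun s => (psi s).re) ((q θ / p θ).re) θ :=
        Complex.reCLM.hasFDerivAt.comp_hasDerivAt θ (hpsider θ)
      have : (fun s => (psi s).re) = fun _ => minm := funext hconstv
      rw [this] at hre
      exact ((hasDerivAt_const θ minm).unique hre).symm
    have hset : {θ : ℝ | (q θ * (starRingEnd ℂ) (p θ)).re = 0} = Set.univ := by
      ext θ
      simp only [Set.mem_setOf_eq, Set.mem_univ, iff_true]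
      have hqc2 : q θ * (starRingEnd ℂ) (p θ)
          = (q θ / p θ) * ((Complex.normSq (p θ) : ℝ) : ℂ) := by
        rw [← Complex.mul_conj, div_mul_eq_mul_div,
          mul_comm (p θ) ((starRingEnd ℂ) (p θ)), ← mul_assoc, mul_div_assoc,
          div_self (hC2 θ), mul_one]
      rw [hqc2, mul_comm, Complex.re_ofReal_mul, hzero θ, mul_zero]
    rw [hset, interior_univ] at hC1
    exact (Set.mem_empty_iff_false (0:ℝ)).mp (hC1 ▸ Set.mem_univ (0:ℝ))
  ---------------------------------------------------------------------------
  -- Step 2 : sigma and phi facts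
  ---------------------------------------------------------------------------
  have hmmpos : 0 < maxm - minm := sub_pos.mpr hlt
  have hσpos : 0 < sigma := by
    rw [hsigma]; exact div_pos Real.pi_pos hmmpos
  have hσmm : sigma * (maxm - minm) = Real.pi := by
    rw [hsigma]; field_simp
  have hphire : ∀ θ, (phi θ).re = sigma * (psi θ).re - sigma * minm := by
    intro θ
    rw [hphidef θ]
    simp [Complex.sub_re, Complex.re_ofReal_mul]
  have hbnd : ∀ θ : ℝ, 0 ≤ (phi θ).re ∧ (phi θ).re ≤ Real.pi := by
    intro θ
    rw [hphire θ]
    constructor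
    · nlinarith [(hall θ).1]
    · nlinarith [(hall θ).2]
  have hphicont : Continuous fun θ => (phi θ).re :=
    Complex.continuous_re.comp hphic.continuous
  -- attainment of the extrema
  have hIccne : (Set.Icc (0:ℝ) (2*Real.pi)).Nonempty := ⟨0, le_refl 0, h2pi.le⟩
  obtain ⟨θb, _, hθbv⟩ := hcpt.exists_sSup_image_eq hIccne hrecont.continuousOn
  obtain ⟨θa, _, hθav⟩ := hcpt.exists_sInf_image_eq hIccne hrecont.continuousOn
  have hpa : (phi θa).re = 0 := by
    rw [hphire θa]
    have : (psi θa).re = minm := by rw [hminm, hθav]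
    rw [this]; ring
  have hpb : (phi θb).re = Real.pi := by
    rw [hphire θb]
    have : (psi θb).re = maxm := by rw [hmaxm, hθbv]
    rw [this]; linarith [hσmm]
  ---------------------------------------------------------------------------
  -- Step 3 : polar representation of nonzero points
  ---------------------------------------------------------------------------
  have hrep : ∀ z : ℝ × ℝ, z ≠ 0 → ∃ r θ : ℝ, 0 < r ∧ z = (r * Real.cos θ, r * Real.sin θ) := by
    intro z hz
    set w : ℂ := (z.1 : ℂ) + (z.2 : ℂ) * Complex.I with hw
    have hwne : w ≠ 0 := by
      intro h
      apply hz
      have h1 : z.1 = 0 := by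
        have := congrArg Complex.re h; simpa [hw] using this
      have h2 : z.2 = 0 := by
        have := congrArg Complex.im h; simpa [hw] using this
      exact Prod.ext h1 h2
    refine ⟨‖w‖, w.arg, norm_pos_iff.mpr hwne, ?_⟩
    have hweq : ((‖w‖ : ℝ) : ℂ) * Complex.exp ((w.arg : ℂ) * Complex.I) = w :=
      Complex.norm_mul_exp_arg_mul_I w
    have hz1 : z.1 = ‖w‖ * Real.cos w.arg := by
      have := congrArg Complex.re hweq
      simpa [hw, Complex.re_ofReal_mul, Complex.exp_ofReal_mul_I_re] using this.symm
    have hz2 : z.2 = ‖w‖ * Real.sin w.arg := by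
      have := congrArg Complex.im hweq
      simpa [hw, Complex.im_ofReal_mul, Complex.exp_ofReal_mul_I_im] using this.symm
    exact Prod.ext hz1 hz2
  ---------------------------------------------------------------------------
  -- Step 4 : smoothness of Z away from the origin
  ---------------------------------------------------------------------------
  have hsmooth : ∀ z₀ : ℝ × ℝ, z₀ ≠ 0 → ContDiffAt ℝ (⊤:ℕ∞) Z z₀ := by
    intro z₀ hz₀
    set w₀ : ℂ := (z₀.1 : ℂ) + (z₀.2 : ℂ) * Complex.I with hw₀
    have hw₀ne : w₀ ≠ 0 := by
      intro h
      apply hz₀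
      have h1 : z₀.1 = 0 := by
        have := congrArg Complex.re h; simpa [hw₀] using this
      have h2 : z₀.2 = 0 := by
        have := congrArg Complex.im h; simpa [hw₀] using this
      exact Prod.ext h1 h2
    set θ₀ : ℝ := w₀.arg with hθ₀
    set r₀ : ℝ := ‖w₀‖ with hr₀
    have hr₀pos : 0 < r₀ := norm_pos_iff.mpr hw₀ne
    have hw₀eq : (r₀ : ℂ) * Complex.exp ((θ₀ : ℂ) * Complex.I) = w₀ :=
      Complex.norm_mul_exp_arg_mul_I w₀
    set c : ℂ := Complex.exp (-(θ₀ : ℂ) * Complex.I) with hc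
    set u : ℝ × ℝ → ℂ := fun z => ((z.1 : ℂ) + (z.2 : ℂ) * Complex.I) * c with hu
    have huz₀ : u z₀ = (r₀ : ℂ) := by
      rw [hu]
      show w₀ * c = _
      rw [← hw₀eq, hc, mul_assoc, ← Complex.exp_add]
      norm_num
    have hucont : Continuous u := by
      apply Continuous.mul _ continuous_const
      exact (Complex.continuous_ofReal.comp continuous_fst).add
        ((Complex.continuous_ofReal.comp continuous_snd).mul continuous_const)
    set U : Set (ℝ × ℝ) := {z | 0 < (u z).re} with hU
    have hUopen : IsOpen U := isOpen_lt continuous_const (Complex.continuous_re.comp hucont)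
    have hz₀U : z₀ ∈ U := by
      simp only [hU, Set.mem_setOf_eq, huz₀, Complex.ofReal_re]
      exact hr₀pos
    set g : ℝ × ℝ → ℂ := fun z =>
      ((Real.sqrt (z.1 ^ 2 + z.2 ^ 2) ^ sigma : ℝ) : ℂ)
        * Complex.exp (Complex.I * phi (θ₀ + (Complex.log (u z)).im)) with hg
    have hEq : Set.EqOn Z g U := by
      intro z hzU
      have hure : 0 < (u z).re := hzU
      have hune : u z ≠ 0 := fun h => by simp [h] at hure
      set r : ℝ := ‖(u z)‖ with hr
      have hrpos : 0 < r := norm_pos_iff.mpr hune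
      set θ : ℝ := θ₀ + (u z).arg with hθdef
      have hlogim : (Complex.log (u z)).im = (u z).arg := Complex.log_im _
      have hwz : (z.1 : ℂ) + (z.2 : ℂ) * Complex.I
          = (r : ℂ) * Complex.exp ((θ : ℂ) * Complex.I) := by
        have h1 : (r : ℂ) * Complex.exp (((u z).arg : ℂ) * Complex.I) = u z :=
          Complex.norm_mul_exp_arg_mul_I (u z)
        have h2 : ((z.1 : ℂ) + (z.2 : ℂ) * Complex.I)
            = u z * Complex.exp ((θ₀:ℂ) * Complex.I) := by
          rw [hu, hc, mul_assoc, ← Complex.exp_add]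
          norm_num
        rw [h2, ← h1, hθdef]
        push_cast
        rw [mul_assoc, ← Complex.exp_add]
        ring_nf
      have hz1 : z.1 = r * Real.cos θ := by
        have := congrArg Complex.re hwz
        simpa [Complex.re_ofReal_mul, Complex.exp_ofReal_mul_I_re] using this
      have hz2 : z.2 = r * Real.sin θ := by
        have := congrArg Complex.im hwz
        simpa [Complex.im_ofReal_mul, Complex.exp_ofReal_mul_I_im] using this
      have hsqrt : Real.sqrt (z.1 ^ 2 + z.2 ^ 2) = r := by
        have hids : z.1 ^ 2 + z.2 ^ 2 = r ^ 2 := by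
          rw [hz1, hz2, mul_pow, mul_pow, ← mul_add, Real.cos_sq_add_sin_sq, mul_one]
        rw [hids]
        exact Real.sqrt_sq hrpos.le
      have hzeq : z = (r * Real.cos θ, r * Real.sin θ) := Prod.ext hz1 hz2
      calc Z z = Z (r * Real.cos θ, r * Real.sin θ) := by rw [← hzeq]
        _ = ((r ^ sigma : ℝ) : ℂ) * Complex.exp (Complex.I * phi θ) := hZ r θ hrpos
        _ = g z := by rw [hg]; simp only; rw [hsqrt, hlogim, ← hθdef]
    have hgc : ContDiffAt ℝ (⊤:ℕ∞) g z₀ := by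
      have hsum : ContDiff ℝ (⊤:ℕ∞) (fun z : ℝ × ℝ => z.1 ^ 2 + z.2 ^ 2) :=
        (contDiff_fst.pow 2).add (contDiff_snd.pow 2)
      have hpos : (0:ℝ) < z₀.1 ^ 2 + z₀.2 ^ 2 := by
        have : z₀.1 ≠ 0 ∨ z₀.2 ≠ 0 := by
          by_contra hcc
          push_neg at hcc
          exact hz₀ (Prod.ext hcc.1 hcc.2)
        rcases this with h | h <;> positivity
      have hsq : ContDiffAt ℝ (⊤:ℕ∞) (fun z : ℝ × ℝ => Real.sqrt (z.1 ^ 2 + z.2 ^ 2)) z₀ :=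
        (Real.contDiffAt_sqrt hpos.ne').comp z₀ hsum.contDiffAt
      have hsqne : Real.sqrt (z₀.1 ^ 2 + z₀.2 ^ 2) ≠ 0 := by positivity
      have hrpowc : ContDiffAt ℝ (⊤:ℕ∞)
          (fun z : ℝ × ℝ => Real.sqrt (z.1 ^ 2 + z.2 ^ 2) ^ sigma) z₀ :=
        ContDiffAt.comp (g := fun x : ℝ => x ^ sigma) z₀ (contDiffAt_rpow_const_of_ne hsqne) hsq
      have hfac1 : ContDiffAt ℝ (⊤:ℕ∞)
          (fun z : ℝ × ℝ => ((Real.sqrt (z.1 ^ 2 + z.2 ^ 2) ^ sigma : ℝ) : ℂ)) z₀ :=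
        Complex.ofRealCLM.contDiff.contDiffAt.comp z₀ hrpowc
      have huc : ContDiff ℝ (⊤:ℕ∞) u := by
        apply ContDiff.mul _ contDiff_const
        exact (Complex.ofRealCLM.contDiff.comp contDiff_fst).add
          ((Complex.ofRealCLM.contDiff.comp contDiff_snd).mul contDiff_const)
      have hlogc : ContDiffAt ℝ (⊤:ℕ∞) (fun z : ℝ × ℝ => Complex.log (u z)) z₀ := by
        have hmem : u z₀ ∈ Complex.slitPlane := by
          rw [Complex.mem_slitPlane_iff, huz₀]
          left; simpa using hr₀pos
        exact ((Complex.contDiffAt_log hmem).restrict_scalars ℝ).comp z₀ huc.contDiffAt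
      have hargc : ContDiffAt ℝ (⊤:ℕ∞) (fun z : ℝ × ℝ => θ₀ + (Complex.log (u z)).im) z₀ :=
        contDiffAt_const.add (Complex.imCLM.contDiff.contDiffAt.comp z₀ hlogc)
      have hfac2 : ContDiffAt ℝ (⊤:ℕ∞)
          (fun z : ℝ × ℝ => Complex.exp (Complex.I * phi (θ₀ + (Complex.log (u z)).im))) z₀ :=
        Complex.contDiff_exp.contDiffAt.comp z₀
          (contDiff_const.contDiffAt.mul (hphic.contDiffAt.comp z₀ hargc))
      exact hfac1.mul hfac2
    exact hgc.congr_of_eventuallyEq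
      (Filter.eventuallyEq_of_mem (hUopen.mem_nhds hz₀U) hEq)
  ---------------------------------------------------------------------------
  -- Step 5 : the PDE and the nonvanishing of the differential
  ---------------------------------------------------------------------------
  have hmain : ∀ z₀ : ℝ × ℝ, z₀ ≠ 0 →
      (A z₀ * fderiv ℝ Z z₀ (1, 0) + B z₀ * fderiv ℝ Z z₀ (0, 1) = 0) ∧
      fderiv ℝ Z z₀ ≠ 0 := by
    intro z₀ hz₀
    obtain ⟨r₀, θ₀, hr₀pos, hz₀eq⟩ := hrep z₀ hz₀
    have hdiff : DifferentiableAt ℝ Z z₀ := (hsmooth z₀ hz₀).differentiableAt (by simp)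
    set D := fderiv ℝ Z z₀ with hDdef
    have hD : HasFDerivAt Z D z₀ := hdiff.hasFDerivAt
    rw [hz₀eq] at hD
    set E : ℂ := Complex.exp (Complex.I * phi θ₀) with hE
    set dphi : ℂ := (sigma : ℂ) * (q θ₀ / p θ₀) with hdphi
    have hphid : HasDerivAt phi dphi θ₀ := by
      rw [hphie, hdphi]
      exact ((hpsider θ₀).const_mul (sigma:ℂ)).sub_const _
    -- radial direction
    have hX : D (Real.cos θ₀, Real.sin θ₀)
        = ((sigma * r₀ ^ (sigma - 1) : ℝ) : ℂ) * E := by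
      have hc1 : HasDerivAt (fun t : ℝ => ((t * Real.cos θ₀, t * Real.sin θ₀) : ℝ × ℝ))
          ((Real.cos θ₀, Real.sin θ₀)) r₀ := by
        have h1 : HasDerivAt (fun t : ℝ => t * Real.cos θ₀) (Real.cos θ₀) r₀ := by
          simpa using (hasDerivAt_id r₀).mul_const (Real.cos θ₀)
        have h2 : HasDerivAt (fun t : ℝ => t * Real.sin θ₀) (Real.sin θ₀) r₀ := by
          simpa using (hasDerivAt_id r₀).mul_const (Real.sin θ₀)
        exact h1.prodMk h2
      have hcomp1 : HasDerivAt (fun t : ℝ => Z (t * Real.cos θ₀, t * Real.sin θ₀))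
          (D (Real.cos θ₀, Real.sin θ₀)) r₀ := hD.comp_hasDerivAt r₀ hc1
      have hmod : HasDerivAt (fun t : ℝ => ((t ^ sigma : ℝ) : ℂ) * E)
          (((sigma * r₀ ^ (sigma - 1) : ℝ) : ℂ) * E) r₀ := by
        have h1 : HasDerivAt (fun t : ℝ => t ^ sigma) (sigma * r₀ ^ (sigma - 1)) r₀ :=
          Real.hasDerivAt_rpow_const (Or.inl hr₀pos.ne')
        have h2 : HasDerivAt (fun t : ℝ => ((t ^ sigma : ℝ) : ℂ))
            ((sigma * r₀ ^ (sigma - 1) : ℝ) : ℂ) r₀ :=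
          Complex.ofRealCLM.hasFDerivAt.comp_hasDerivAt r₀ h1
        exact h2.mul_const E
      have hev : (fun t : ℝ => Z (t * Real.cos θ₀, t * Real.sin θ₀))
          =ᶠ[nhds r₀] (fun t : ℝ => ((t ^ sigma : ℝ) : ℂ) * E) :=
        Filter.eventuallyEq_of_mem (isOpen_Ioi.mem_nhds hr₀pos) (fun t ht => hZ t θ₀ ht)
      exact hcomp1.unique (hmod.congr_of_eventuallyEq hev)
    -- angular direction
    have hY : D (-(r₀ * Real.sin θ₀), r₀ * Real.cos θ₀)
        = ((r₀ ^ sigma : ℝ) : ℂ) * (E * (Complex.I * dphi)) := by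
      have hc2 : HasDerivAt (fun t : ℝ => ((r₀ * Real.cos t, r₀ * Real.sin t) : ℝ × ℝ))
          ((-(r₀ * Real.sin θ₀), r₀ * Real.cos θ₀)) θ₀ := by
        have h1 : HasDerivAt (fun t : ℝ => r₀ * Real.cos t) (-(r₀ * Real.sin θ₀)) θ₀ := by
          simpa [mul_comm, mul_assoc, mul_neg] using (Real.hasDerivAt_cos θ₀).const_mul r₀
        have h2 : HasDerivAt (fun t : ℝ => r₀ * Real.sin t) (r₀ * Real.cos θ₀) θ₀ := by
          simpa using (Real.hasDerivAt_sin θ₀).const_mul r₀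
        exact h1.prodMk h2
      have hcomp2 : HasDerivAt (fun t : ℝ => Z (r₀ * Real.cos t, r₀ * Real.sin t))
          (D (-(r₀ * Real.sin θ₀), r₀ * Real.cos θ₀)) θ₀ := hD.comp_hasDerivAt θ₀ hc2
      have hfun : (fun t : ℝ => Z (r₀ * Real.cos t, r₀ * Real.sin t))
          = fun t : ℝ => ((r₀ ^ sigma : ℝ) : ℂ) * Complex.exp (Complex.I * phi t) :=
        funext fun t => hZ r₀ t hr₀pos
      have hmod2 : HasDerivAt
          (fun t : ℝ => ((r₀ ^ sigma : ℝ) : ℂ) * Complex.exp (Complex.I * phi t))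
          (((r₀ ^ sigma : ℝ) : ℂ) * (E * (Complex.I * dphi))) θ₀ := by
        have h1 : HasDerivAt (fun t : ℝ => Complex.I * phi t) (Complex.I * dphi) θ₀ :=
          hphid.const_mul Complex.I
        exact (h1.cexp).const_mul ((r₀ ^ sigma : ℝ) : ℂ)
      rw [hfun] at hcomp2
      exact hcomp2.unique hmod2
    -- homogeneity of A and B
    have hz₀smul : z₀ = r₀ • ((Real.cos θ₀, Real.sin θ₀) : ℝ × ℝ) := by
      rw [hz₀eq]; simp [Prod.smul_mk, smul_eq_mul]
    have hAz : A z₀ = (r₀ : ℂ) ^ lam * a θ₀ := by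
      rw [hz₀smul, hAh r₀ hr₀pos, ha]
    have hBz : B z₀ = (r₀ : ℂ) ^ lam * b θ₀ := by
      rw [hz₀smul, hBh r₀ hr₀pos, hb]
    -- algebra
    set cθ := Real.cos θ₀ with hcθ
    set sθ := Real.sin θ₀ with hsθ
    have hcs : sθ ^ 2 + cθ ^ 2 = 1 := Real.sin_sq_add_cos_sq θ₀
    have hrne : r₀ ≠ 0 := hr₀pos.ne'
    have hv1 : ((1:ℝ), (0:ℝ)) = cθ • ((cθ, sθ) : ℝ × ℝ)
        + (-(sθ) / r₀) • ((-(r₀ * sθ), r₀ * cθ) : ℝ × ℝ) := by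
      apply Prod.ext <;> simp [Prod.smul_mk, smul_eq_mul] <;> field_simp <;> nlinarith [hcs]
    have hv2 : ((0:ℝ), (1:ℝ)) = sθ • ((cθ, sθ) : ℝ × ℝ)
        + (cθ / r₀) • ((-(r₀ * sθ), r₀ * cθ) : ℝ × ℝ) := by
      apply Prod.ext <;> simp [Prod.smul_mk, smul_eq_mul] <;> field_simp <;> nlinarith [hcs]
    have hD1 : D (1, 0) = (cθ : ℂ) * D (cθ, sθ)
        + ((-(sθ) / r₀ : ℝ) : ℂ) * D (-(r₀ * sθ), r₀ * cθ) := by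
      rw [hv1, map_add, map_smul, map_smul, Complex.real_smul, Complex.real_smul]
    have hD2 : D (0, 1) = (sθ : ℂ) * D (cθ, sθ)
        + ((cθ / r₀ : ℝ) : ℂ) * D (-(r₀ * sθ), r₀ * cθ) := by
      rw [hv2, map_add, map_smul, map_smul, Complex.real_smul, Complex.real_smul]
    have hpow : r₀ ^ (sigma - 1) = r₀ ^ sigma / r₀ := by
      rw [Real.rpow_sub hr₀pos, Real.rpow_one]
    have hEne : E ≠ 0 := by rw [hE]; exact Complex.exp_ne_zero _
    have hTpos : 0 < r₀ ^ sigma := Real.rpow_pos_of_pos hr₀pos sigma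
    have hpne : b θ₀ * (cθ : ℂ) - a θ₀ * (sθ : ℂ) ≠ 0 := by
      have := hC2 θ₀
      rwa [hpdef θ₀] at this
    rw [hqdef θ₀, hpdef θ₀] at hdphi
    rw [← hcθ, ← hsθ] at hdphi
    constructor
    · have hrC : (r₀ : ℂ) ≠ 0 := Complex.ofReal_ne_zero.mpr hrne
      rw [hAz, hBz, hD1, hD2, hX, hY, hpow, hdphi]
      push_cast
      field_simp [hrC, hpne, show (↑cθ * b θ₀ - a θ₀ * ↑sθ : ℂ) ≠ 0 by rw [mul_comm]; exact hpne]
      ring_nf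
      simp only [Complex.I_sq]
      ring
    · intro h0
      rw [h0] at hX
      simp only [ContinuousLinearMap.zero_apply] at hX
      have hne : ((sigma * r₀ ^ (sigma - 1) : ℝ) : ℂ) * E ≠ 0 := by
        apply mul_ne_zero _ hEne
        simp only [ne_eq, Complex.ofReal_eq_zero]
        rw [hpow]
        positivity
      exact hne hX.symm
  ---------------------------------------------------------------------------
  -- Step 6 : conclusion
  ---------------------------------------------------------------------------
  refine ⟨fun z hz => (hsmooth z hz).contDiffWithinAt, fun z hz => (hmain z hz).1,
    fun z hz => (hmain z hz).2, ?_⟩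
  -- the range
  apply Set.Subset.antisymm
  · rintro _ ⟨z, rfl⟩
    by_cases hz : z = 0
    · simp [hz, hZzero]
    obtain ⟨r, θ, hr, hzeq⟩ := hrep z hz
    rw [hzeq, hZ r θ hr]
    simp only [Set.mem_setOf_eq]
    have him : (((r ^ sigma : ℝ) : ℂ) * Complex.exp (Complex.I * phi θ)).im
        = r ^ sigma * (Complex.exp (Complex.I * phi θ)).im := Complex.im_ofReal_mul _ _
    rw [him]
    apply mul_nonneg (Real.rpow_pos_of_pos hr sigma).le
    rw [Complex.exp_im]
    apply mul_nonneg (Real.exp_nonneg _)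
    have h1 : (Complex.I * phi θ).im = (phi θ).re := by simp
    rw [h1]
    exact Real.sin_nonneg_of_nonneg_of_le_pi (hbnd θ).1 (hbnd θ).2
  · rintro w hw
    by_cases hw0 : w = 0
    · exact ⟨0, by rw [hZzero, hw0]⟩
    set x := w.arg with hx
    have hx0 : 0 ≤ x := Complex.arg_nonneg_iff.mpr hw
    have hxπ : x ≤ Real.pi := Complex.arg_le_pi w
    have hsub : Set.uIcc ((fun θ => (phi θ).re) θa) ((fun θ => (phi θ).re) θb)
        ⊆ (fun θ => (phi θ).re) '' Set.uIcc θa θb :=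
      intermediate_value_uIcc hphicont.continuousOn
    have hxmem : x ∈ Set.uIcc ((fun θ => (phi θ).re) θa) ((fun θ => (phi θ).re) θb) := by
      simp only [hpa, hpb]
      rw [Set.uIcc_of_le Real.pi_nonneg]
      exact ⟨hx0, hxπ⟩
    obtain ⟨θs, _, hθs⟩ := hsub hxmem
    set y := (phi θs).im with hy
    set t := ‖w‖ * Real.exp y with ht
    have htpos : 0 < t := mul_pos (norm_pos_iff.mpr hw0) (Real.exp_pos y)
    set r := t ^ sigma⁻¹ with hrdef
    have hrpos : 0 < r := Real.rpow_pos_of_pos htpos _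
    have hrσ : r ^ sigma = t := Real.rpow_inv_rpow htpos.le hσpos.ne'
    refine ⟨(r * Real.cos θs, r * Real.sin θs), ?_⟩
    rw [hZ r θs hrpos, hrσ]
    have hθs' : (phi θs).re = x := hθs
    have hphieq : Complex.I * phi θs = ((-y : ℝ) : ℂ) + (x : ℂ) * Complex.I := by
      have hri : ((phi θs).re : ℂ) + ((phi θs).im : ℂ) * Complex.I = phi θs :=
        Complex.re_add_im (phi θs)
      rw [← hri, hθs', ← hy]
      push_cast
      ring_nf
      simp only [Complex.I_sq]
      ring
    rw [hphieq, Complex.exp_add, ← Complex.ofReal_exp]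
    have habs : (‖w‖ : ℂ) * Complex.exp ((x : ℂ) * Complex.I) = w :=
      Complex.norm_mul_exp_arg_mul_I w
    have hey : ((Real.exp y : ℝ) : ℂ) * ((Real.exp (-y) : ℝ) : ℂ) = 1 := by
      rw [← Complex.ofReal_mul, ← Real.exp_add]
      simp
    rw [ht]
    conv_rhs => rw [← habs]
    rw [Complex.ofReal_mul]
    linear_combination ((‖w‖ : ℂ) * Complex.exp ((x : ℂ) * Complex.I)) * hey
end

section
/- Suppose μ = iβ with β ∈ ℝ, β ≠ 0. Set m = min_{θ∈[0,2π]} e^{−φ₂(θ)} and M = max_{θ∈[0,2π]} e^{−φ₂(θ)}. Then Z_{iβ} maps ℝ²∖{0} onto the closed annulus A(m,M) = {z ∈ ℂ : m ≤ |z| ≤ M}; moreover, for every ε > 0, Z_{iβ} maps the punctured disc {(x,y) : 0 < x²+y² < ε²} onto A(m,M). -/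
open Real Complex Set

/-- Suppose μ = iβ with β real nonzero.  With m, M the min and max of e^{-φ₂},
Z_{iβ} maps ℝ²∖{0} onto the closed annulus {m ≤ |z| ≤ M}, and in fact maps every
punctured disc around the origin onto that annulus. -/
theorem stmt_3
    (A B : ℝ × ℝ → ℂ) (lam : ℂ)
    (hA : ContDiffOn ℝ (⊤ : ℕ∞) A {z : ℝ × ℝ | z ≠ 0})
    (hB : ContDiffOn ℝ (⊤ : ℕ∞) B {z : ℝ × ℝ | z ≠ 0})
    (hlam : 1 < lam.re)
    (hAh : ∀ t : ℝ, 0 < t → ∀ z : ℝ × ℝ, A (t • z) = (t : ℂ) ^ lam * A z)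
    (hBh : ∀ t : ℝ, 0 < t → ∀ z : ℝ × ℝ, B (t • z) = (t : ℂ) ^ lam * B z)
    (a b p q : ℝ → ℂ)
    (ha : ∀ θ : ℝ, a θ = A (Real.cos θ, Real.sin θ))
    (hb : ∀ θ : ℝ, b θ = B (Real.cos θ, Real.sin θ))
    (hpdef : ∀ θ : ℝ, p θ = b θ * (Real.cos θ : ℂ) - a θ * (Real.sin θ : ℂ))
    (hqdef : ∀ θ : ℝ, q θ = Complex.I * (a θ * (Real.cos θ : ℂ) + b θ * (Real.sin θ : ℂ)))
    (hC1 : interior {θ : ℝ | (q θ * (starRingEnd ℂ) (p θ)).re = 0} = ∅)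
    (hC2 : ∀ θ : ℝ, p θ ≠ 0)
    (mu : ℂ)
    (hmudef : mu = (1 / (2 * Real.pi)) * ∫ θ in (0:ℝ)..(2 * Real.pi), q θ / p θ)
    (beta : ℝ) (hbeta : beta ≠ 0) (hmubeta : mu = Complex.I * (beta : ℂ))
    (phi : ℝ → ℂ)
    (hphiper : Function.Periodic phi (2 * Real.pi))
    (hphider : ∀ θ : ℝ, HasDerivAt phi (q θ / (mu * p θ) - 1) θ)
    (hphimean : (∫ θ in (0:ℝ)..(2 * Real.pi), phi θ) = 0)
    (m M : ℝ)
    (hm : m = sInf ((fun θ => Real.exp (-(phi θ).im)) '' Set.Icc (0:ℝ) (2 * Real.pi)))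
    (hM : M = sSup ((fun θ => Real.exp (-(phi θ).im)) '' Set.Icc (0:ℝ) (2 * Real.pi)))
    (Z : ℝ × ℝ → ℂ)
    (hZ : ∀ r θ : ℝ, 0 < r → Z (r * Real.cos θ, r * Real.sin θ) =
      ((Real.exp (-(phi θ).im)) : ℂ) *
        Complex.exp (Complex.I * ((θ + (phi θ).re - Real.log r / beta : ℝ) : ℂ))) :
    (Z '' {z : ℝ × ℝ | z ≠ 0} = {w : ℂ | m ≤ ‖w‖ ∧ ‖w‖ ≤ M}) ∧
    (∀ ε : ℝ, 0 < ε →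
      Z '' {z : ℝ × ℝ | z ≠ 0 ∧ ‖z‖ < ε} = {w : ℂ | m ≤ ‖w‖ ∧ ‖w‖ ≤ M}) := by

  classical
  set f : ℝ → ℝ := fun θ => Real.exp (-(phi θ).im) with hf
  have hphic : Continuous phi := by
    rw [continuous_iff_continuousAt]; exact fun θ => (hphider θ).continuousAt
  have hfc : Continuous f := Real.continuous_exp.comp (Complex.continuous_im.comp hphic).neg
  have hfper : Function.Periodic f (2 * Real.pi) := fun θ => by simp [hf, hphiper θ]
  have h2pi : (0:ℝ) < 2 * Real.pi := by positivity
  set K := f '' Set.Icc (0:ℝ) (2 * Real.pi) with hK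
  have hKc : IsCompact K := (isCompact_Icc).image hfc
  have hKne : K.Nonempty := ⟨f 0, ⟨0, ⟨le_refl _, h2pi.le⟩, rfl⟩⟩
  have hmmem : m ∈ K := hm ▸ hKc.sInf_mem hKne
  have hMmem : M ∈ K := hM ▸ hKc.sSup_mem hKne
  have hbd : ∀ θ : ℝ, m ≤ f θ ∧ f θ ≤ M := by
    intro θ
    obtain ⟨y, hy, hyeq⟩ := hfper.exists_mem_Ico₀ h2pi θ
    have hyK : f y ∈ K := ⟨y, ⟨hy.1, hy.2.le⟩, rfl⟩
    rw [hyeq]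
    exact ⟨hm ▸ csInf_le hKc.bddBelow hyK, hM ▸ le_csSup hKc.bddAbove hyK⟩
  have hmM : m ≤ M := by
    obtain ⟨θ0, _, hθ0⟩ := hmmem
    have h1 := (hbd θ0).1
    have h2 := (hbd θ0).2
    rw [hθ0] at h1 h2
    exact le_trans h1 h2
  have hattain : ∀ v : ℝ, m ≤ v → v ≤ M → ∃ θ : ℝ, f θ = v := by
    intro v hv1 hv2
    obtain ⟨θm, _, hθm⟩ := hmmem
    obtain ⟨θM, _, hθM⟩ := hMmem
    have hvmem : v ∈ Set.uIcc (f θm) (f θM) := by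
      rw [hθm, hθM, Set.uIcc_of_le hmM]; exact ⟨hv1, hv2⟩
    obtain ⟨θ, _, hθ⟩ :=
      intermediate_value_uIcc (a := θm) (b := θM) (f := f) hfc.continuousOn hvmem
    exact ⟨θ, hθ⟩
  have habsZ : ∀ r θ : ℝ, 0 < r →
      ‖Z (r * Real.cos θ, r * Real.sin θ)‖ = f θ := by
    intro r θ hr
    rw [hZ r θ hr]
    simp only [norm_mul, Complex.norm_exp, Complex.norm_real, Real.norm_eq_abs]
    have hre : (Complex.I * ((θ + (phi θ).re - Real.log r / beta : ℝ) : ℂ)).re = 0 := by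
      simp [Complex.mul_re]
    rw [hre, Real.exp_zero, mul_one, abs_of_pos (Real.exp_pos _)]
  have hsub : ∀ z : ℝ × ℝ, z ≠ 0 → m ≤ ‖Z z‖ ∧ ‖Z z‖ ≤ M := by
    intro z hz
    set w : ℂ := ⟨z.1, z.2⟩ with hw
    have hwne : w ≠ 0 := by
      intro h
      apply hz
      have h1 : w.re = 0 := by rw [h]; rfl
      have h2 : w.im = 0 := by rw [h]; rfl
      exact Prod.ext h1 h2
    have hr : 0 < ‖w‖ := norm_pos_iff.mpr hwne
    have hzeq : z = (‖w‖ * Real.cos (Complex.arg w),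
        ‖w‖ * Real.sin (Complex.arg w)) := by
      rw [Complex.norm_mul_cos_arg w, Complex.norm_mul_sin_arg w]
    rw [hzeq, habsZ _ _ hr]
    exact hbd _
  have hsur : ∀ w : ℂ, m ≤ ‖w‖ → ‖w‖ ≤ M → ∀ ε : ℝ, 0 < ε →
      ∃ z : ℝ × ℝ, z ≠ 0 ∧ ‖z‖ < ε ∧ Z z = w := by
    intro w hw1 hw2 ε hε
    obtain ⟨θ, hθ⟩ := hattain ‖w‖ hw1 hw2
    set t : ℝ := beta * (θ + (phi θ).re - Complex.arg w) with ht
    have hs : (2 * Real.pi) * beta ≠ 0 := mul_ne_zero h2pi.ne' hbeta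
    have hkey : ∃ k : ℤ, t - (k : ℝ) * ((2 * Real.pi) * beta) < Real.log ε := by
      rcases lt_or_gt_of_ne hs with hneg | hpos
      · obtain ⟨k, hk⟩ := exists_int_lt ((t - Real.log ε) / ((2 * Real.pi) * beta))
        refine ⟨k, ?_⟩
        have := (lt_div_iff_of_neg hneg).mp hk
        linarith
      · obtain ⟨k, hk⟩ := exists_int_gt ((t - Real.log ε) / ((2 * Real.pi) * beta))
        refine ⟨k, ?_⟩
        have := (div_lt_iff₀ hpos).mp hk
        linarith
    obtain ⟨k, hk⟩ := hkey
    set r : ℝ := Real.exp (t - (k : ℝ) * ((2 * Real.pi) * beta)) with hrdef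
    have hr : 0 < r := Real.exp_pos _
    have hrε : r < ε := by
      rw [hrdef, ← Real.lt_log_iff_exp_lt hε]; exact hk
    have hlogr : Real.log r = t - (k : ℝ) * ((2 * Real.pi) * beta) := Real.log_exp _
    refine ⟨(r * Real.cos θ, r * Real.sin θ), ?_, ?_, ?_⟩
    · intro h
      have h1 : r * Real.cos θ = 0 := congrArg Prod.fst h
      have h2 : r * Real.sin θ = 0 := congrArg Prod.snd h
      have hc : Real.cos θ = 0 := by
        rcases mul_eq_zero.mp h1 with h' | h'
        · exact absurd h' hr.ne'
        · exact h'
      have hsθ : Real.sin θ = 0 := by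
        rcases mul_eq_zero.mp h2 with h' | h'
        · exact absurd h' hr.ne'
        · exact h'
      have := Real.sin_sq_add_cos_sq θ
      rw [hc, hsθ] at this; norm_num at this
    · rw [Prod.norm_def]
      have hb1 : ‖r * Real.cos θ‖ < ε := by
        rw [Real.norm_eq_abs, abs_mul, abs_of_pos hr]
        calc r * |Real.cos θ| ≤ r * 1 :=
              mul_le_mul_of_nonneg_left (Real.abs_cos_le_one θ) hr.le
          _ < ε := by linarith
      have hb2 : ‖r * Real.sin θ‖ < ε := by
        rw [Real.norm_eq_abs, abs_mul, abs_of_pos hr]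
        calc r * |Real.sin θ| ≤ r * 1 :=
              mul_le_mul_of_nonneg_left (Real.abs_sin_le_one θ) hr.le
          _ < ε := by linarith
      exact max_lt hb1 hb2
    · rw [hZ r θ hr]
      have harg : (θ + (phi θ).re - Real.log r / beta : ℝ)
          = Complex.arg w + (k : ℝ) * (2 * Real.pi) := by
        rw [hlogr, ht]
        field_simp
        ring
      rw [harg]
      have hcast : ((Complex.arg w + (k : ℝ) * (2 * Real.pi) : ℝ) : ℂ)
          = (Complex.arg w : ℂ) + (k : ℤ) * (2 * (Real.pi : ℂ)) := by
        push_cast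
        ring
      rw [hcast]
      have hexp : Complex.exp (Complex.I *
            ((Complex.arg w : ℂ) + (k : ℤ) * (2 * (Real.pi : ℂ))))
          = Complex.exp ((Complex.arg w : ℂ) * Complex.I) := by
        rw [show Complex.I * ((Complex.arg w : ℂ) + (k : ℤ) * (2 * (Real.pi : ℂ)))
            = (Complex.arg w : ℂ) * Complex.I
              + (k : ℤ) * (2 * (Real.pi : ℂ) * Complex.I) by ring,
          Complex.exp_add, Complex.exp_int_mul_two_pi_mul_I, mul_one]
      rw [hexp]
      have hfθ : ((Real.exp (-(phi θ).im) : ℝ) : ℂ) = ((‖w‖ : ℝ) : ℂ) := by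
        exact_mod_cast congrArg Complex.ofReal hθ
      rw [hfθ, Complex.norm_mul_exp_arg_mul_I]
  constructor
  · ext w
    constructor
    · rintro ⟨z, hz, rfl⟩
      exact hsub z hz
    · rintro ⟨hw1, hw2⟩
      obtain ⟨z, hz, _, hZz⟩ := hsur w hw1 hw2 1 one_pos
      exact ⟨z, hz, hZz⟩
  · intro ε hε
    ext w
    constructor
    · rintro ⟨z, ⟨hz, _⟩, rfl⟩
      exact hsub z hz
    · rintro ⟨hw1, hw2⟩
      obtain ⟨z, hz, hzε, hZz⟩ := hsur w hw1 hw2 ε hε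
      exact ⟨z, ⟨hz, hzε⟩, hZz⟩
end

section
/- Let l ≥ 0 be an integer, σ ∈ ℂ with Re σ > 0, f₀ ∈ C^l(ℝ/2πℤ; ℂ), and let f be the σ-homogeneous function given in polar coordinates by f(r,θ) = r^σ f₀(θ). Assume μ(λ − σ − 1) ∉ ℤ. Then: (i) the ordinary differential equation p(θ)v′(θ) − i(σ+1−λ)q(θ)v(θ) = f₀(θ) has a unique 2π-periodic C¹ solution v, namely v(θ) = [K + ∫₀^θ (f₀(s)/p(s)) e^{−i(σ+1−λ)ψ(s)} ds]·e^{i(σ+1−λ)ψ(θ)} with K = (1 − e^{2πiμ(σ+1−λ)})^{-1} ∫₀^{2π} (f₀(s)/p(s)) e^{−i(σ+1−λ)ψ(s)} ds; (ii) v ∈ C^{l+1}, and the function u given in polar coordinates by u(r,θ) = r^{σ+1−λ} v(θ) is of class C^{l+1} on ℝ²∖{0} and satisfies Lu = f pointwise on ℝ²∖{0}; (iii) if Re σ > Re λ − 1, then u extends continuously (indeed Hölder-continuously) to 0 with value 0. -/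
set_option maxHeartbeats 1000000

open Real Complex Set
open scoped ContDiff

lemma aux_exp_arg (ξ : ℂ) (hξ : ξ ≠ 0) :
    Complex.exp ((ξ.arg : ℂ) * Complex.I) = ξ / (‖ξ‖ : ℂ) := by
  rw [eq_div_iff (by exact_mod_cast norm_ne_zero_iff.mpr hξ), mul_comm]
  exact Complex.norm_mul_exp_arg_mul_I ξ

lemma aux_polar_shift (ζ₀ ζ : ℂ) (h₀ : ζ₀ ≠ 0) (h : ζ ≠ 0) :
    Complex.exp ((((ζ₀.arg + (Complex.log (ζ * (starRingEnd ℂ) ζ₀)).im : ℝ)) : ℂ) * Complex.I)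
      = ζ / (‖ζ‖ : ℂ) := by
  have hconj : (starRingEnd ℂ) ζ₀ ≠ 0 := by simpa using h₀
  have hmul : ζ * (starRingEnd ℂ) ζ₀ ≠ 0 := mul_ne_zero h hconj
  rw [Complex.log_im]
  push_cast
  rw [add_mul, Complex.exp_add, aux_exp_arg _ hmul, aux_exp_arg ζ₀ h₀]
  rw [norm_mul, Complex.norm_conj]
  have hc0 : ζ₀ * (starRingEnd ℂ) ζ₀ = (‖ζ₀‖ : ℂ) ^ 2 := by
    rw [Complex.mul_conj]; norm_cast; rw [Complex.sq_norm]
  have h1 : (‖ζ₀‖ : ℝ) ≠ 0 := norm_ne_zero_iff.mpr h₀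
  have h2 : (‖ζ‖ : ℝ) ≠ 0 := norm_ne_zero_iff.mpr h
  rw [div_mul_div_comm]
  push_cast
  rw [div_eq_div_iff (by norm_cast; positivity) (by exact_mod_cast h2)]
  linear_combination (ζ * (‖ζ‖ : ℂ)) * hc0

lemma aux_cos (ζ₀ ζ : ℂ) (h₀ : ζ₀ ≠ 0) (h : ζ ≠ 0) :
    ‖ζ‖ * Real.cos (ζ₀.arg + (Complex.log (ζ * (starRingEnd ℂ) ζ₀)).im) = ζ.re := by
  have h1 := Complex.exp_ofReal_mul_I_re (ζ₀.arg + (Complex.log (ζ * (starRingEnd ℂ) ζ₀)).im)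
  rw [aux_polar_shift ζ₀ ζ h₀ h, Complex.div_ofReal_re] at h1
  rw [← h1]
  field_simp [norm_ne_zero_iff.mpr h]

lemma aux_sin (ζ₀ ζ : ℂ) (h₀ : ζ₀ ≠ 0) (h : ζ ≠ 0) :
    ‖ζ‖ * Real.sin (ζ₀.arg + (Complex.log (ζ * (starRingEnd ℂ) ζ₀)).im) = ζ.im := by
  have h1 := Complex.exp_ofReal_mul_I_im (ζ₀.arg + (Complex.log (ζ * (starRingEnd ℂ) ζ₀)).im)
  rw [aux_polar_shift ζ₀ ζ h₀ h, Complex.div_ofReal_im] at h1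
  rw [← h1]
  field_simp [norm_ne_zero_iff.mpr h]

/-- Equation Lu = f with f σ-homogeneous, f(r,θ) = r^σ f₀(θ), f₀ ∈ C^l, Re σ > 0,
under the nonresonance assumption μ(λ−σ−1) ∉ ℤ:
(i) the periodic ODE p v' − i(σ+1−λ) q v = f₀ has the stated unique 2π-periodic
C¹ solution v; (ii) v ∈ C^{l+1} and u = r^{σ+1−λ} v(θ) is C^{l+1} on ℝ²∖{0} and
solves Lu = f there; (iii) if Re σ > Re λ − 1 then u is Hölder continuous at 0
with value 0. -/
theorem stmt_10
    (A B : ℝ × ℝ → ℂ) (lam : ℂ)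
    (hA : ContDiffOn ℝ (⊤ : ℕ∞) A {z : ℝ × ℝ | z ≠ 0})
    (hB : ContDiffOn ℝ (⊤ : ℕ∞) B {z : ℝ × ℝ | z ≠ 0})
    (hlam : 1 < lam.re)
    (hAh : ∀ t : ℝ, 0 < t → ∀ z : ℝ × ℝ, A (t • z) = (t : ℂ) ^ lam * A z)
    (hBh : ∀ t : ℝ, 0 < t → ∀ z : ℝ × ℝ, B (t • z) = (t : ℂ) ^ lam * B z)
    (a b p q : ℝ → ℂ)
    (ha : ∀ θ : ℝ, a θ = A (Real.cos θ, Real.sin θ))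
    (hb : ∀ θ : ℝ, b θ = B (Real.cos θ, Real.sin θ))
    (hpdef : ∀ θ : ℝ, p θ = b θ * (Real.cos θ : ℂ) - a θ * (Real.sin θ : ℂ))
    (hqdef : ∀ θ : ℝ, q θ = Complex.I * (a θ * (Real.cos θ : ℂ) + b θ * (Real.sin θ : ℂ)))
    (hC1 : interior {θ : ℝ | (q θ * (starRingEnd ℂ) (p θ)).re = 0} = ∅)
    (hC2 : ∀ θ : ℝ, p θ ≠ 0)
    (mu : ℂ)
    (hmudef : mu = (1 / (2 * Real.pi)) * ∫ θ in (0:ℝ)..(2 * Real.pi), q θ / p θ)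
    (psi : ℝ → ℂ) (hpsi0 : psi 0 = 0)
    (hpsider : ∀ θ : ℝ, HasDerivAt psi (q θ / p θ) θ)
    (l : ℕ) (sig : ℂ) (hsig : 0 < sig.re)
    (f₀ : ℝ → ℂ) (hf₀ : ContDiff ℝ (l : ℕ∞) f₀) (hf₀per : Function.Periodic f₀ (2 * Real.pi))
    (f : ℝ × ℝ → ℂ)
    (hf : ∀ r θ : ℝ, 0 < r → f (r * Real.cos θ, r * Real.sin θ) =
      Complex.exp (sig * (Real.log r : ℂ)) * f₀ θ)
    (hres : ¬ ∃ k : ℤ, mu * (lam - sig - 1) = (k : ℂ))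
    (K : ℂ)
    (hK : K = (1 - Complex.exp (2 * Real.pi * Complex.I * mu * (sig + 1 - lam)))⁻¹ *
      ∫ s in (0:ℝ)..(2 * Real.pi), f₀ s / p s * Complex.exp (-(Complex.I * (sig + 1 - lam)) * psi s))
    (v : ℝ → ℂ)
    (hv : ∀ θ : ℝ, v θ =
      (K + ∫ s in (0:ℝ)..θ, f₀ s / p s * Complex.exp (-(Complex.I * (sig + 1 - lam)) * psi s)) *
        Complex.exp (Complex.I * (sig + 1 - lam) * psi θ))
    (u : ℝ × ℝ → ℂ)
    (hu : ∀ r θ : ℝ, 0 < r → u (r * Real.cos θ, r * Real.sin θ) =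
      Complex.exp ((sig + 1 - lam) * (Real.log r : ℂ)) * v θ) :
    -- (i) v is the unique 2π-periodic C¹ solution of p v' − i(σ+1−λ) q v = f₀
    (Function.Periodic v (2 * Real.pi) ∧ ContDiff ℝ 1 v ∧
      (∀ θ : ℝ, p θ * deriv v θ - Complex.I * (sig + 1 - lam) * q θ * v θ = f₀ θ) ∧
      (∀ w : ℝ → ℂ, ContDiff ℝ 1 w → Function.Periodic w (2 * Real.pi) →
        (∀ θ : ℝ, p θ * deriv w θ - Complex.I * (sig + 1 - lam) * q θ * w θ = f₀ θ) →
        w = v)) ∧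
    -- (ii) regularity and Lu = f on ℝ²∖{0}
    (ContDiff ℝ ((l : ℕ∞) + 1) v ∧
      ContDiffOn ℝ ((l : ℕ∞) + 1) u {z : ℝ × ℝ | z ≠ 0} ∧
      (∀ z : ℝ × ℝ, z ≠ 0 →
        A z * fderiv ℝ u z (1, 0) + B z * fderiv ℝ u z (0, 1) = f z)) ∧
    -- (iii) Hölder continuity at 0 with value 0 when Re σ > Re λ − 1
    (lam.re - 1 < sig.re →
      ∃ C α : ℝ, 0 < C ∧ 0 < α ∧
        ∀ z : ℝ × ℝ, z ≠ 0 → ‖z‖ ≤ 1 → ‖u z‖ ≤ C * ‖z‖ ^ α) := by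
  -- ### Smoothness of the coefficient functions
  have hopen : IsOpen {z : ℝ × ℝ | z ≠ 0} := isOpen_ne
  have hcirc : ∀ θ : ℝ, ((Real.cos θ, Real.sin θ) : ℝ × ℝ) ≠ 0 := by
    intro θ h
    have h1 : Real.cos θ = 0 := congrArg Prod.fst h
    have h2 : Real.sin θ = 0 := congrArg Prod.snd h
    nlinarith [Real.sin_sq_add_cos_sq θ]
  have hacd : ContDiff ℝ (⊤:ℕ∞) a := by
    rw [funext ha, contDiff_iff_contDiffAt]
    intro θ
    exact (hA.contDiffAt (hopen.mem_nhds (hcirc θ))).comp θ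
      ((Real.contDiff_cos.prodMk Real.contDiff_sin).contDiffAt)
  have hbcd : ContDiff ℝ (⊤:ℕ∞) b := by
    rw [funext hb, contDiff_iff_contDiffAt]
    intro θ
    exact (hB.contDiffAt (hopen.mem_nhds (hcirc θ))).comp θ
      ((Real.contDiff_cos.prodMk Real.contDiff_sin).contDiffAt)
  have hoccd : ContDiff ℝ (⊤:ℕ∞) (fun θ : ℝ => ((Real.cos θ : ℝ) : ℂ)) :=
    Complex.ofRealCLM.contDiff.comp Real.contDiff_cos
  have hoscd : ContDiff ℝ (⊤:ℕ∞) (fun θ : ℝ => ((Real.sin θ : ℝ) : ℂ)) :=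
    Complex.ofRealCLM.contDiff.comp Real.contDiff_sin
  have hpcd : ContDiff ℝ (⊤:ℕ∞) p := by
    rw [funext hpdef]
    exact (hbcd.mul hoccd).sub (hacd.mul hoscd)
  have hqcd : ContDiff ℝ (⊤:ℕ∞) q := by
    rw [funext hqdef]
    exact contDiff_const.mul ((hacd.mul hoccd).add (hbcd.mul hoscd))
  have hqp : ContDiff ℝ (⊤:ℕ∞) (fun θ => q θ / p θ) := by
    simp only [div_eq_mul_inv]; exact hqcd.mul (hpcd.inv hC2)
  have hqpc : Continuous (fun θ => q θ / p θ) := hqp.continuous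
  -- ### psi
  have hpsid : Differentiable ℝ psi := fun θ => (hpsider θ).differentiableAt
  have hpsideriv : deriv psi = fun θ => q θ / p θ := funext fun θ => (hpsider θ).deriv
  have hpsicd : ContDiff ℝ (⊤:ℕ∞) psi := by
    rw [show ((⊤:ℕ∞) : WithTop ℕ∞) = ∞ from rfl, contDiff_infty_iff_deriv]
    exact ⟨hpsid, by rw [hpsideriv]; exact_mod_cast hqp⟩
  -- ### smoothness of v and the ODE
  have hltop : ((l:ℕ∞) : WithTop ℕ∞) ≤ ((⊤:ℕ∞) : WithTop ℕ∞) := by exact_mod_cast le_top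
  have hl1top : (((l:ℕ∞)+1 : ℕ∞) : WithTop ℕ∞) ≤ ((⊤:ℕ∞) : WithTop ℕ∞) := by
    exact_mod_cast le_top
  have hone_le : ((1:ℕ∞) : WithTop ℕ∞) ≤ (((l:ℕ∞)+1 : ℕ∞) : WithTop ℕ∞) := by
    exact_mod_cast le_add_self
  set g : ℝ → ℂ := fun s => f₀ s / p s * Complex.exp (-(Complex.I * (sig + 1 - lam)) * psi s)
    with hg
  have hgcd : ContDiff ℝ (l:ℕ∞) g := by
    simp only [hg, div_eq_mul_inv]
    exact (hf₀.mul ((hpcd.of_le hltop).inv hC2)).mul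
      (Complex.contDiff_exp.comp ((contDiff_const.mul (hpsicd.of_le hltop))))
  have hgcont : Continuous g := hgcd.continuous
  set G : ℝ → ℂ := fun θ => ∫ s in (0:ℝ)..θ, g s with hG
  have hGder : ∀ θ : ℝ, HasDerivAt G (g θ) θ :=
    fun θ => (hgcont.integral_hasStrictDerivAt 0 θ).hasDerivAt
  have hGcd : ContDiff ℝ ((l:ℕ∞)+1) G := by
    rw [contDiff_succ_iff_deriv]
    refine ⟨fun θ => (hGder θ).differentiableAt, by simp, ?_⟩
    have : deriv G = g := funext fun θ => (hGder θ).deriv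
    rw [this]; exact_mod_cast hgcd
  have hveq : v = fun θ => (K + G θ) * Complex.exp (Complex.I * (sig + 1 - lam) * psi θ) :=
    funext fun θ => hv θ
  have hvcd : ContDiff ℝ ((l:ℕ∞)+1) v := by
    rw [hveq]
    exact (contDiff_const.add hGcd).mul
      (Complex.contDiff_exp.comp (contDiff_const.mul (hpsicd.of_le hl1top)))
  have hv1 : ContDiff ℝ 1 v := hvcd.of_le hone_le
  have hvdiff : Differentiable ℝ v := hv1.differentiable one_ne_zero
  have hODE : ∀ θ : ℝ, p θ * deriv v θ
      - Complex.I * (sig + 1 - lam) * q θ * v θ = f₀ θ := by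
    intro θ
    have hvder : HasDerivAt v
        (g θ * Complex.exp (Complex.I * (sig + 1 - lam) * psi θ)
          + (K + G θ) * (Complex.exp (Complex.I * (sig + 1 - lam) * psi θ)
            * (Complex.I * (sig + 1 - lam) * (q θ / p θ)))) θ := by
      rw [hveq]
      exact ((hGder θ).const_add K).mul
        (((hpsider θ).const_mul (Complex.I * (sig + 1 - lam))).cexp)
    rw [hvder.deriv, hv θ]
    have hGg : (∫ s in (0:ℝ)..θ, f₀ s / p s
        * Complex.exp (-(Complex.I * (sig + 1 - lam)) * psi s)) = G θ := rfl
    rw [hGg]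
    have hp := hC2 θ
    have hexp : Complex.exp (-(Complex.I * (sig + 1 - lam) * psi θ))
        * Complex.exp (Complex.I * (sig + 1 - lam) * psi θ) = 1 := by
      rw [← Complex.exp_add]; ring_nf; exact Complex.exp_zero
    simp only [hg, neg_mul]
    field_simp
    linear_combination f₀ θ * hexp
  -- ### periodicity of v
  have hvper : Function.Periodic v (2 * Real.pi) := by
    intro θ
    have h1 := hu 1 θ one_pos
    have h2 := hu 1 (θ + 2 * Real.pi) one_pos
    rw [Real.cos_add_two_pi, Real.sin_add_two_pi] at h2
    rw [h1] at h2
    exact mul_left_cancel₀ (Complex.exp_ne_zero _) h2.symm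
  -- ### psi(2π) = 2π μ
  have hpsi2pi : psi (2 * Real.pi) = 2 * Real.pi * mu := by
    have hint : ∫ θ in (0:ℝ)..(2 * Real.pi), q θ / p θ = psi (2 * Real.pi) - psi 0 :=
      intervalIntegral.integral_eq_sub_of_hasDerivAt (fun θ _ => hpsider θ)
        (hqpc.intervalIntegrable _ _)
    rw [hint, hpsi0, sub_zero] at hmudef
    have hpi : (2 * Real.pi : ℂ) ≠ 0 := by
      simp [Real.pi_ne_zero, Complex.ofReal_ne_zero]
    field_simp at hmudef
    linear_combination -hmudef
  -- ### uniqueness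
  have huniq : ∀ w : ℝ → ℂ, ContDiff ℝ 1 w → Function.Periodic w (2 * Real.pi) →
      (∀ θ : ℝ, p θ * deriv w θ - Complex.I * (sig + 1 - lam) * q θ * w θ = f₀ θ) →
      w = v := by
    intro w hw1 hwper hwode
    set c : ℂ := sig + 1 - lam with hc
    set d : ℝ → ℂ := fun θ => w θ - v θ with hd
    have hwdiff : Differentiable ℝ w := hw1.differentiable one_ne_zero
    have hdder : ∀ θ, HasDerivAt d (Complex.I * c * (q θ / p θ) * d θ) θ := by
      intro θ
      have h1 : HasDerivAt d (deriv w θ - deriv v θ) θ :=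
        ((hwdiff θ).hasDerivAt).sub ((hvdiff θ).hasDerivAt)
      convert h1 using 1
      have hpθ := hC2 θ
      have e1 := hwode θ
      have e2 := hODE θ
      field_simp [hd]
      linear_combination e2 - e1
    set E : ℝ → ℂ := fun θ => d θ * Complex.exp (-(Complex.I * c) * psi θ) with hE
    have hEder : ∀ θ, HasDerivAt E 0 θ := by
      intro θ
      have h1 := (hdder θ).mul (((hpsider θ).const_mul (-(Complex.I * c))).cexp)
      convert h1 using 1
      rfl
      rfl
      have hpθ := hC2 θ
      have key : ∀ X Y d e : ℂ, (0:ℂ) = X * Y * d * e + d * (e * (-X * Y)) := by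
        intros; ring
      exact key _ _ _ _
    have hEconst : ∀ θ, E θ = E 0 :=
      fun θ => is_const_of_deriv_eq_zero (fun s => (hEder s).differentiableAt)
        (fun s => (hEder s).deriv) θ 0
    have hdform : ∀ θ, d θ = d 0 * Complex.exp (Complex.I * c * psi θ) := by
      intro θ
      have h1 : d θ * Complex.exp (-(Complex.I * c) * psi θ) = d 0 := by
        have h2 := hEconst θ
        simp only [hE] at h2
        rw [h2, hpsi0, mul_zero, Complex.exp_zero, mul_one]
      have h3 : Complex.exp (-(Complex.I * c) * psi θ)
          * Complex.exp (Complex.I * c * psi θ) = 1 := by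
        rw [← Complex.exp_add]; ring_nf; exact Complex.exp_zero
      calc d θ = d θ * (Complex.exp (-(Complex.I * c) * psi θ)
            * Complex.exp (Complex.I * c * psi θ)) := by rw [h3, mul_one]
        _ = (d θ * Complex.exp (-(Complex.I * c) * psi θ))
            * Complex.exp (Complex.I * c * psi θ) := by ring
        _ = d 0 * Complex.exp (Complex.I * c * psi θ) := by rw [h1]
    have hd0 : d 0 = 0 := by
      by_contra hne
      have hper : d (0 + 2 * Real.pi) = d 0 := by
        simp only [hd]; rw [hwper 0, hvper 0]
      rw [hdform (0 + 2 * Real.pi), zero_add, hpsi2pi] at hper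
      have hexp1 : Complex.exp (Complex.I * c * (2 * Real.pi * mu)) = 1 :=
        mul_left_cancel₀ hne (hper.trans (mul_one (d 0)).symm)
      rw [Complex.exp_eq_one_iff] at hexp1
      obtain ⟨n, hn⟩ := hexp1
      apply hres
      refine ⟨-n, ?_⟩
      have h2pi : (2 * (Real.pi:ℂ) * Complex.I : ℂ) ≠ 0 := by
        simp [Real.pi_ne_zero, Complex.I_ne_zero, Complex.ofReal_ne_zero]
      have hmc : mu * c = n := by
        apply mul_left_cancel₀ h2pi
        linear_combination hn
      push_cast
      linear_combination -hmc
    funext θ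
    have h5 := hdform θ
    rw [hd0, zero_mul] at h5
    exact sub_eq_zero.mp h5
  -- ### representation of nonzero points
  have hζfre : ∀ w : ℝ × ℝ, ((w.1 : ℂ) + (w.2 : ℂ) * Complex.I).re = w.1 := by intro w; simp
  have hζfim : ∀ w : ℝ × ℝ, ((w.1 : ℂ) + (w.2 : ℂ) * Complex.I).im = w.2 := by intro w; simp
  have hζfne : ∀ w : ℝ × ℝ, w ≠ 0 → ((w.1 : ℂ) + (w.2 : ℂ) * Complex.I) ≠ 0 := by
    intro w hw h
    exact hw (Prod.ext (by rw [← hζfre w, h]; rfl) (by rw [← hζfim w, h]; rfl))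
  have hrep : ∀ z : ℝ × ℝ, z ≠ 0 → ∃ r θ : ℝ, 0 < r ∧ r ≤ 2 * ‖z‖ ∧
      z = (r * Real.cos θ, r * Real.sin θ) := by
    intro z hz
    have hζne := hζfne z hz
    refine ⟨‖(z.1 : ℂ) + (z.2 : ℂ) * Complex.I‖,
      Complex.arg ((z.1 : ℂ) + (z.2 : ℂ) * Complex.I), norm_pos_iff.mpr hζne, ?_, ?_⟩
    · have h1 := Complex.norm_le_abs_re_add_abs_im ((z.1 : ℂ) + (z.2 : ℂ) * Complex.I)
      rw [hζfre, hζfim] at h1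
      have h2 : |z.1| ≤ ‖z‖ := by
        simpa [Real.norm_eq_abs] using norm_fst_le z
      have h3 : |z.2| ≤ ‖z‖ := by
        simpa [Real.norm_eq_abs] using norm_snd_le z
      linarith
    · have habs : ‖(z.1 : ℂ) + (z.2 : ℂ) * Complex.I‖ ≠ 0 :=
        norm_ne_zero_iff.mpr hζne
      have h1 : ‖(z.1 : ℂ) + (z.2 : ℂ) * Complex.I‖
          * Real.cos (Complex.arg ((z.1 : ℂ) + (z.2 : ℂ) * Complex.I)) = z.1 := by
        rw [Complex.cos_arg hζne, hζfre]; field_simp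
      have h2 : ‖(z.1 : ℂ) + (z.2 : ℂ) * Complex.I‖
          * Real.sin (Complex.arg ((z.1 : ℂ) + (z.2 : ℂ) * Complex.I)) = z.2 := by
        rw [Complex.sin_arg, hζfim]; field_simp
      exact Prod.ext h1.symm h2.symm
  -- ### smoothness of u away from 0
  set n : WithTop ℕ∞ := (((l:ℕ∞)+1 : ℕ∞) : WithTop ℕ∞) with hn
  have hζfcd : ContDiff ℝ n (fun w : ℝ × ℝ => (w.1 : ℂ) + (w.2 : ℂ) * Complex.I) :=
    (Complex.ofRealCLM.contDiff.comp contDiff_fst).add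
      ((Complex.ofRealCLM.contDiff.comp contDiff_snd).mul contDiff_const)
  have hucdAt : ∀ z₀ : ℝ × ℝ, z₀ ≠ 0 → ContDiffAt ℝ n u z₀ := by
    intro z₀ hz₀'
    have hζ₀ne : ((z₀.1 : ℂ) + (z₀.2 : ℂ) * Complex.I) ≠ 0 := hζfne z₀ hz₀'
    have hFu : ∀ w : ℝ × ℝ, w ≠ 0 → u w =
        Complex.exp ((sig + 1 - lam)
            * (Real.log (‖(w.1 : ℂ) + (w.2 : ℂ) * Complex.I‖) : ℂ)) *
          v (((z₀.1 : ℂ) + (z₀.2 : ℂ) * Complex.I).arg +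
            (Complex.log (((w.1 : ℂ) + (w.2 : ℂ) * Complex.I) *
              (starRingEnd ℂ) ((z₀.1 : ℂ) + (z₀.2 : ℂ) * Complex.I))).im) := by
      intro w hw
      have hζne : ((w.1 : ℂ) + (w.2 : ℂ) * Complex.I) ≠ 0 := hζfne w hw
      have hrpos : 0 < ‖(w.1 : ℂ) + (w.2 : ℂ) * Complex.I‖ :=
        norm_pos_iff.mpr hζne
      have hcos := aux_cos _ _ hζ₀ne hζne
      have hsin := aux_sin _ _ hζ₀ne hζne
      rw [hζfre] at hcos
      rw [hζfim] at hsin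
      have hwrep : w = (‖(w.1 : ℂ) + (w.2 : ℂ) * Complex.I‖ *
          Real.cos (((z₀.1 : ℂ) + (z₀.2 : ℂ) * Complex.I).arg +
            (Complex.log (((w.1 : ℂ) + (w.2 : ℂ) * Complex.I) *
              (starRingEnd ℂ) ((z₀.1 : ℂ) + (z₀.2 : ℂ) * Complex.I))).im),
          ‖(w.1 : ℂ) + (w.2 : ℂ) * Complex.I‖ *
          Real.sin (((z₀.1 : ℂ) + (z₀.2 : ℂ) * Complex.I).arg +
            (Complex.log (((w.1 : ℂ) + (w.2 : ℂ) * Complex.I) *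
              (starRingEnd ℂ) ((z₀.1 : ℂ) + (z₀.2 : ℂ) * Complex.I))).im)) :=
        Prod.ext hcos.symm hsin.symm
      conv_lhs => rw [hwrep]
      rw [hu _ _ hrpos]
    have hslit : ((z₀.1 : ℂ) + (z₀.2 : ℂ) * Complex.I) *
        (starRingEnd ℂ) ((z₀.1 : ℂ) + (z₀.2 : ℂ) * Complex.I) ∈ Complex.slitPlane := by
      rw [Complex.mem_slitPlane_iff]
      left
      rw [Complex.mul_conj]
      simpa using Complex.normSq_pos.mpr hζ₀ne
    have habspos : 0 < ‖(z₀.1 : ℂ) + (z₀.2 : ℂ) * Complex.I‖ :=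
      norm_pos_iff.mpr hζ₀ne
    have habscd : ContDiffAt ℝ n (fun w : ℝ × ℝ =>
        ‖(w.1 : ℂ) + (w.2 : ℂ) * Complex.I‖) z₀ :=
      (contDiffAt_norm ℝ hζ₀ne).comp z₀ hζfcd.contDiffAt
    have hlogcd : ContDiffAt ℝ n (fun w : ℝ × ℝ =>
        Real.log (‖(w.1 : ℂ) + (w.2 : ℂ) * Complex.I‖)) z₀ :=
      (Real.contDiffAt_log.mpr habspos.ne').comp (g := Real.log) z₀ habscd
    have hexpcd : ContDiffAt ℝ n (fun w : ℝ × ℝ =>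
        Complex.exp ((sig + 1 - lam)
          * (Real.log (‖(w.1 : ℂ) + (w.2 : ℂ) * Complex.I‖) : ℂ))) z₀ :=
      (Complex.contDiff_exp.contDiffAt (n := n)).comp z₀
        (contDiffAt_const.mul ((Complex.ofRealCLM.contDiff.contDiffAt (n := n)).comp z₀ hlogcd))
    have hclogcd : ContDiffAt ℝ n (fun w : ℝ × ℝ =>
        Complex.log (((w.1 : ℂ) + (w.2 : ℂ) * Complex.I) *
          (starRingEnd ℂ) ((z₀.1 : ℂ) + (z₀.2 : ℂ) * Complex.I))) z₀ :=
      ((Complex.contDiffAt_log hslit).restrict_scalars ℝ).comp (g := Complex.log) z₀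
        (hζfcd.contDiffAt.mul contDiffAt_const)
    have hangcd : ContDiffAt ℝ n (fun w : ℝ × ℝ =>
        ((z₀.1 : ℂ) + (z₀.2 : ℂ) * Complex.I).arg +
          (Complex.log (((w.1 : ℂ) + (w.2 : ℂ) * Complex.I) *
            (starRingEnd ℂ) ((z₀.1 : ℂ) + (z₀.2 : ℂ) * Complex.I))).im) z₀ :=
      contDiffAt_const.add ((Complex.imCLM.contDiff.contDiffAt (n := n)).comp z₀ hclogcd)
    have hFsm : ContDiffAt ℝ n (fun w : ℝ × ℝ =>
        Complex.exp ((sig + 1 - lam)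
            * (Real.log (‖(w.1 : ℂ) + (w.2 : ℂ) * Complex.I‖) : ℂ)) *
          v (((z₀.1 : ℂ) + (z₀.2 : ℂ) * Complex.I).arg +
            (Complex.log (((w.1 : ℂ) + (w.2 : ℂ) * Complex.I) *
              (starRingEnd ℂ) ((z₀.1 : ℂ) + (z₀.2 : ℂ) * Complex.I))).im)) z₀ :=
      hexpcd.mul ((hvcd.contDiffAt (n := n)).comp z₀ hangcd)
    apply hFsm.congr_of_eventuallyEq
    filter_upwards [isOpen_ne.mem_nhds hz₀'] with w hw
    exact hFu w hw
  have hucd : ContDiffOn ℝ ((l : ℕ∞) + 1) u {z : ℝ × ℝ | z ≠ 0} :=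
    fun z hz => (hucdAt z hz).contDiffWithinAt
  -- ### Lu = f
  have hLu : ∀ z : ℝ × ℝ, z ≠ 0 →
      A z * fderiv ℝ u z (1, 0) + B z * fderiv ℝ u z (0, 1) = f z := by
    intro z hz
    obtain ⟨r, θ₀, hr, -, hzeq⟩ := hrep z hz
    have hud : DifferentiableAt ℝ u z := (hucdAt z hz).differentiableAt (ne_of_gt (lt_of_lt_of_le (by norm_num) hone_le))
    rw [hzeq] at hud ⊢
    set D := fderiv ℝ u (r * Real.cos θ₀, r * Real.sin θ₀) with hD
    have hDf : HasFDerivAt u D (r * Real.cos θ₀, r * Real.sin θ₀) := hud.hasFDerivAt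
    have hγ1 : HasDerivAt (fun t : ℝ => ((t * Real.cos θ₀, t * Real.sin θ₀) : ℝ × ℝ))
        ((Real.cos θ₀, Real.sin θ₀) : ℝ × ℝ) r :=
      (hasDerivAt_mul_const (Real.cos θ₀)).prodMk (hasDerivAt_mul_const (Real.sin θ₀))
    have h1 : HasDerivAt (fun t : ℝ => u (t * Real.cos θ₀, t * Real.sin θ₀))
        (D (Real.cos θ₀, Real.sin θ₀)) r := hDf.comp_hasDerivAt r hγ1
    have h2 : HasDerivAt (fun t : ℝ => Complex.exp ((sig + 1 - lam) * (Real.log t : ℂ)) * v θ₀)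
        (Complex.exp ((sig + 1 - lam) * (Real.log r : ℂ))
          * ((sig + 1 - lam) * (r : ℂ)⁻¹) * v θ₀) r := by
      have := (((Real.hasDerivAt_log hr.ne').ofReal_comp.const_mul
        (sig + 1 - lam)).cexp).mul_const (v θ₀)
      convert this using 1
      rfl
      push_cast
      rfl
    have heq1 : (fun t : ℝ => u (t * Real.cos θ₀, t * Real.sin θ₀)) =ᶠ[nhds r]
        (fun t : ℝ => Complex.exp ((sig + 1 - lam) * (Real.log t : ℂ)) * v θ₀) := by
      filter_upwards [Ioi_mem_nhds hr] with t ht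
      exact hu t θ₀ ht
    have e1 : D (Real.cos θ₀, Real.sin θ₀)
        = Complex.exp ((sig + 1 - lam) * (Real.log r : ℂ))
          * ((sig + 1 - lam) * (r : ℂ)⁻¹) * v θ₀ :=
      (h1.congr_of_eventuallyEq heq1.symm).unique h2
    have hγ2 : HasDerivAt (fun s : ℝ => ((r * Real.cos s, r * Real.sin s) : ℝ × ℝ))
        ((r * -Real.sin θ₀, r * Real.cos θ₀) : ℝ × ℝ) θ₀ :=
      ((Real.hasDerivAt_cos θ₀).const_mul r).prodMk ((Real.hasDerivAt_sin θ₀).const_mul r)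
    have h3 : HasDerivAt (fun s : ℝ => u (r * Real.cos s, r * Real.sin s))
        (D (r * -Real.sin θ₀, r * Real.cos θ₀)) θ₀ := hDf.comp_hasDerivAt θ₀ hγ2
    have h4 : HasDerivAt (fun s : ℝ => Complex.exp ((sig + 1 - lam) * (Real.log r : ℂ)) * v s)
        (Complex.exp ((sig + 1 - lam) * (Real.log r : ℂ)) * deriv v θ₀) θ₀ :=
      ((hvdiff θ₀).hasDerivAt).const_mul _
    have heq2 : (fun s : ℝ => u (r * Real.cos s, r * Real.sin s)) =
        (fun s : ℝ => Complex.exp ((sig + 1 - lam) * (Real.log r : ℂ)) * v s) :=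
      funext fun s => hu r s hr
    have e2 : D (r * -Real.sin θ₀, r * Real.cos θ₀)
        = Complex.exp ((sig + 1 - lam) * (Real.log r : ℂ)) * deriv v θ₀ := by
      rw [heq2] at h3
      exact h3.unique h4
    have hd10 : ((1, 0) : ℝ × ℝ) = Real.cos θ₀ • ((Real.cos θ₀, Real.sin θ₀) : ℝ × ℝ)
        + (-Real.sin θ₀ / r) • ((r * -Real.sin θ₀, r * Real.cos θ₀) : ℝ × ℝ) := by
      have h5 := Real.sin_sq_add_cos_sq θ₀
      apply Prod.ext <;> simp [Prod.smul_def, smul_eq_mul] <;> field_simp <;> nlinarith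
    have hd01 : ((0, 1) : ℝ × ℝ) = Real.sin θ₀ • ((Real.cos θ₀, Real.sin θ₀) : ℝ × ℝ)
        + (Real.cos θ₀ / r) • ((r * -Real.sin θ₀, r * Real.cos θ₀) : ℝ × ℝ) := by
      have h5 := Real.sin_sq_add_cos_sq θ₀
      apply Prod.ext <;> simp [Prod.smul_def, smul_eq_mul] <;> field_simp <;> nlinarith
    have eD10 : D (1, 0) = (Real.cos θ₀ : ℂ) * D (Real.cos θ₀, Real.sin θ₀)
        + ((-Real.sin θ₀ / r : ℝ) : ℂ) * D (r * -Real.sin θ₀, r * Real.cos θ₀) := by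
      rw [hd10, map_add, map_smul, map_smul]
      simp [Complex.real_smul]
    have eD01 : D (0, 1) = (Real.sin θ₀ : ℂ) * D (Real.cos θ₀, Real.sin θ₀)
        + ((Real.cos θ₀ / r : ℝ) : ℂ) * D (r * -Real.sin θ₀, r * Real.cos θ₀) := by
      rw [hd01, map_add, map_smul, map_smul]
      simp [Complex.real_smul]
    have hsm : ((r * Real.cos θ₀, r * Real.sin θ₀) : ℝ × ℝ)
        = r • ((Real.cos θ₀, Real.sin θ₀) : ℝ × ℝ) := by
      simp [Prod.smul_def, smul_eq_mul]
    have hcpow : (r : ℂ) ^ lam = Complex.exp (lam * (Real.log r : ℂ)) := by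
      rw [Complex.cpow_def_of_ne_zero (by exact_mod_cast hr.ne'),
        Complex.ofReal_log hr.le, mul_comm]
    have hAv : A (r * Real.cos θ₀, r * Real.sin θ₀)
        = Complex.exp (lam * (Real.log r : ℂ)) * a θ₀ := by
      rw [hsm, hAh r hr, ← ha, hcpow]
    have hBv : B (r * Real.cos θ₀, r * Real.sin θ₀)
        = Complex.exp (lam * (Real.log r : ℂ)) * b θ₀ := by
      rw [hsm, hBh r hr, ← hb, hcpow]
    have hEE : Complex.exp (lam * (Real.log r : ℂ))
        * Complex.exp ((sig + 1 - lam) * (Real.log r : ℂ))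
        = Complex.exp (sig * (Real.log r : ℂ)) * (r : ℂ) := by
      have hre : (r : ℂ) = Complex.exp ((Real.log r : ℂ)) := by
        rw [← Complex.ofReal_exp, Real.exp_log hr]
      rw [hre, ← Complex.exp_add, ← Complex.exp_add]
      congr 1
      ring
    rw [hf r θ₀ hr, hAv, hBv, eD10, eD01, e1, e2]
    have hode := hODE θ₀
    rw [hpdef θ₀, hqdef θ₀] at hode
    have hrne : (r : ℂ) ≠ 0 := by exact_mod_cast hr.ne'
    have hrinv : (r : ℂ) * ((r : ℂ))⁻¹ = 1 := mul_inv_cancel₀ hrne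
    have hIsq : (Complex.I : ℂ) * Complex.I = -1 := Complex.I_mul_I
    simp only [Complex.ofReal_div, Complex.ofReal_neg]
    linear_combination
      ((r:ℂ))⁻¹ * ((sig + 1 - lam) * v θ₀ * (a θ₀ * (Real.cos θ₀:ℂ) + b θ₀ * (Real.sin θ₀:ℂ))
          + deriv v θ₀ * (b θ₀ * (Real.cos θ₀:ℂ) - a θ₀ * (Real.sin θ₀:ℂ))) * hEE
      + Complex.exp (sig * (Real.log r : ℂ))
          * ((sig + 1 - lam) * v θ₀ * (a θ₀ * (Real.cos θ₀:ℂ) + b θ₀ * (Real.sin θ₀:ℂ))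
          + deriv v θ₀ * (b θ₀ * (Real.cos θ₀:ℂ) - a θ₀ * (Real.sin θ₀:ℂ))) * hrinv
      + Complex.exp (sig * (Real.log r : ℂ)) * hode
      + Complex.exp (sig * (Real.log r : ℂ)) * (sig + 1 - lam) * v θ₀
          * (a θ₀ * (Real.cos θ₀:ℂ) + b θ₀ * (Real.sin θ₀:ℂ)) * hIsq
  -- ### part (iii)
  have hiii : lam.re - 1 < sig.re →
      ∃ C α : ℝ, 0 < C ∧ 0 < α ∧
        ∀ z : ℝ × ℝ, z ≠ 0 → ‖z‖ ≤ 1 → ‖u z‖ ≤ C * ‖z‖ ^ α := by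
    intro hsl
    set α : ℝ := (sig + 1 - lam).re with hα
    have hαval : α = sig.re + 1 - lam.re := by
      simp [hα, Complex.sub_re, Complex.add_re, Complex.one_re]
    have hαpos : 0 < α := by rw [hαval]; linarith
    obtain ⟨M, hM⟩ := isCompact_Icc.exists_bound_of_continuousOn
      (s := Icc (0:ℝ) (2 * Real.pi)) (hv1.continuous.continuousOn (f := v))
    have hMg : ∀ θ : ℝ, ‖v θ‖ ≤ max M 0 + 1 := by
      intro θ
      obtain ⟨y, hy, hyeq⟩ := hvper.exists_mem_Ico₀ Real.two_pi_pos θ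
      rw [hyeq]
      have := hM y ⟨hy.1, hy.2.le⟩
      have h0 : M ≤ max M 0 := le_max_left M 0
      linarith
    refine ⟨(max M 0 + 1) * 2 ^ α, α, by positivity, hαpos, ?_⟩
    intro z hz hz1
    obtain ⟨r, θ₀, hr, hrle, hzeq⟩ := hrep z hz
    have hnorm : ‖u z‖ = Real.exp (α * Real.log r) * ‖v θ₀‖ := by
      conv_lhs => rw [hzeq]
      rw [hu r θ₀ hr, norm_mul]
      congr 1
      rw [Complex.norm_exp]
      congr 1
      simp [Complex.mul_re, Complex.ofReal_re, Complex.ofReal_im, hα]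
    have hrpow : Real.exp (α * Real.log r) = r ^ α := by
      rw [Real.rpow_def_of_pos hr, mul_comm]
    have hzpos : 0 < ‖z‖ := norm_pos_iff.mpr hz
    have h3 : r ^ α ≤ (2 * ‖z‖) ^ α := Real.rpow_le_rpow hr.le hrle hαpos.le
    have h4 : (2 * ‖z‖ : ℝ) ^ α = 2 ^ α * ‖z‖ ^ α :=
      Real.mul_rpow (by norm_num) (norm_nonneg z)
    have h5 : ‖v θ₀‖ ≤ max M 0 + 1 := hMg θ₀
    have h6 : (0:ℝ) < max M 0 + 1 := by positivity
    calc ‖u z‖ = r ^ α * ‖v θ₀‖ := by rw [hnorm, hrpow]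
      _ ≤ (2 ^ α * ‖z‖ ^ α) * (max M 0 + 1) := by
          apply mul_le_mul _ h5 (norm_nonneg _) (by positivity)
          rw [← h4]; exact h3
      _ = (max M 0 + 1) * 2 ^ α * ‖z‖ ^ α := by ring
  exact ⟨⟨hvper, hv1, hODE, huniq⟩, ⟨hvcd, hucd, hLu⟩, hiii⟩
end

section
/- Let σ ∈ ℂ with Re σ > 0, f₀ ∈ C⁰(ℝ/2πℤ; ℂ), and f given in polar coordinates by f(r,θ) = r^σ f₀(θ). Suppose μ(σ+1−λ) ∈ ℤ and that the compatibility condition ∫₀^{2π} (f₀(s)/p(s)) e^{−i(σ+1−λ)ψ(s)} ds = 0 holds. Then the function v(θ) = [∫₀^θ (f₀(s)/p(s)) e^{−i(σ+1−λ)ψ(s)} ds]·e^{i(σ+1−λ)ψ(θ)} is a 2π-periodic C¹ solution of p v′ − i(σ+1−λ) q v = f₀, and the function u given in polar coordinates by u(r,θ) = r^{σ+1−λ} v(θ) satisfies Lu = f pointwise on ℝ²∖{0}. -/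
open Real Complex Set

set_option maxHeartbeats 4000000 in
/-- Resonant case: if μ(σ+1−λ) ∈ ℤ and the compatibility condition
∫₀^{2π} (f₀/p) e^{−i(σ+1−λ)ψ} = 0 holds, then v(θ) = (∫₀^θ (f₀/p) e^{−i(σ+1−λ)ψ}) e^{i(σ+1−λ)ψ(θ)}
is a 2π-periodic C¹ solution of p v' − i(σ+1−λ) q v = f₀, and u = r^{σ+1−λ} v(θ)
solves Lu = f on ℝ²∖{0}. -/
theorem stmt_11
    (A B : ℝ × ℝ → ℂ) (lam : ℂ)
    (hA : ContDiffOn ℝ (⊤ : ℕ∞) A {z : ℝ × ℝ | z ≠ 0})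
    (hB : ContDiffOn ℝ (⊤ : ℕ∞) B {z : ℝ × ℝ | z ≠ 0})
    (hlam : 1 < lam.re)
    (hAh : ∀ t : ℝ, 0 < t → ∀ z : ℝ × ℝ, A (t • z) = (t : ℂ) ^ lam * A z)
    (hBh : ∀ t : ℝ, 0 < t → ∀ z : ℝ × ℝ, B (t • z) = (t : ℂ) ^ lam * B z)
    (a b p q : ℝ → ℂ)
    (ha : ∀ θ : ℝ, a θ = A (Real.cos θ, Real.sin θ))
    (hb : ∀ θ : ℝ, b θ = B (Real.cos θ, Real.sin θ))
    (hpdef : ∀ θ : ℝ, p θ = b θ * (Real.cos θ : ℂ) - a θ * (Real.sin θ : ℂ))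
    (hqdef : ∀ θ : ℝ, q θ = Complex.I * (a θ * (Real.cos θ : ℂ) + b θ * (Real.sin θ : ℂ)))
    (hC1 : interior {θ : ℝ | (q θ * (starRingEnd ℂ) (p θ)).re = 0} = ∅)
    (hC2 : ∀ θ : ℝ, p θ ≠ 0)
    (mu : ℂ)
    (hmudef : mu = (1 / (2 * Real.pi)) * ∫ θ in (0:ℝ)..(2 * Real.pi), q θ / p θ)
    (psi : ℝ → ℂ) (hpsi0 : psi 0 = 0)
    (hpsider : ∀ θ : ℝ, HasDerivAt psi (q θ / p θ) θ)
    (sig : ℂ) (hsig : 0 < sig.re)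
    (f₀ : ℝ → ℂ) (hf₀ : Continuous f₀) (hf₀per : Function.Periodic f₀ (2 * Real.pi))
    (f : ℝ × ℝ → ℂ)
    (hf : ∀ r θ : ℝ, 0 < r → f (r * Real.cos θ, r * Real.sin θ) =
      Complex.exp (sig * (Real.log r : ℂ)) * f₀ θ)
    (hres : ∃ k : ℤ, mu * (sig + 1 - lam) = (k : ℂ))
    (hcompat : (∫ s in (0:ℝ)..(2 * Real.pi),
      f₀ s / p s * Complex.exp (-(Complex.I * (sig + 1 - lam)) * psi s)) = 0)
    (v : ℝ → ℂ)
    (hv : ∀ θ : ℝ, v θ =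
      (∫ s in (0:ℝ)..θ, f₀ s / p s * Complex.exp (-(Complex.I * (sig + 1 - lam)) * psi s)) *
        Complex.exp (Complex.I * (sig + 1 - lam) * psi θ))
    (u : ℝ × ℝ → ℂ)
    (hu : ∀ r θ : ℝ, 0 < r → u (r * Real.cos θ, r * Real.sin θ) =
      Complex.exp ((sig + 1 - lam) * (Real.log r : ℂ)) * v θ) :
    Function.Periodic v (2 * Real.pi) ∧ ContDiff ℝ 1 v ∧
    (∀ θ : ℝ, p θ * deriv v θ - Complex.I * (sig + 1 - lam) * q θ * v θ = f₀ θ) ∧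
    (∀ z : ℝ × ℝ, z ≠ 0 →
      A z * fderiv ℝ u z (1, 0) + B z * fderiv ℝ u z (0, 1) = f z) := by
  set c : ℂ := sig + 1 - lam with hc
  -- continuity of a, b, p, q
  have hcurve : Continuous (fun θ : ℝ => ((Real.cos θ, Real.sin θ) : ℝ × ℝ)) :=
    Real.continuous_cos.prodMk Real.continuous_sin
  have hmem : ∀ θ : ℝ, ((Real.cos θ, Real.sin θ) : ℝ × ℝ) ∈ {z : ℝ × ℝ | z ≠ 0} := by
    intro θ hmem
    have h1 := Real.sin_sq_add_cos_sq θ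
    rw [Prod.ext_iff] at hmem
    simp only [Prod.fst_zero, Prod.snd_zero] at hmem
    rw [hmem.1, hmem.2] at h1; norm_num at h1
  have hacont : Continuous a := by
    rw [funext ha]; exact hA.continuousOn.comp_continuous hcurve hmem
  have hbcont : Continuous b := by
    rw [funext hb]; exact hB.continuousOn.comp_continuous hcurve hmem
  have hpcont : Continuous p := by
    rw [funext hpdef]
    exact (hbcont.mul (Complex.continuous_ofReal.comp Real.continuous_cos)).sub
      (hacont.mul (Complex.continuous_ofReal.comp Real.continuous_sin))
  have hqcont : Continuous q := by
    rw [funext hqdef]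
    exact continuous_const.mul
      ((hacont.mul (Complex.continuous_ofReal.comp Real.continuous_cos)).add
       (hbcont.mul (Complex.continuous_ofReal.comp Real.continuous_sin)))
  have hqp : Continuous (fun θ => q θ / p θ) := hqcont.div hpcont hC2
  -- periodicity of a, b, p, q
  have hap : ∀ θ : ℝ, a (θ + 2 * Real.pi) = a θ := by
    intro θ; rw [ha, ha, Real.cos_add_two_pi, Real.sin_add_two_pi]
  have hbp : ∀ θ : ℝ, b (θ + 2 * Real.pi) = b θ := by
    intro θ; rw [hb, hb, Real.cos_add_two_pi, Real.sin_add_two_pi]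
  have hpp : ∀ θ : ℝ, p (θ + 2 * Real.pi) = p θ := by
    intro θ; rw [hpdef, hpdef, hap, hbp, Real.cos_add_two_pi, Real.sin_add_two_pi]
  have hqq : ∀ θ : ℝ, q (θ + 2 * Real.pi) = q θ := by
    intro θ; rw [hqdef, hqdef, hap, hbp, Real.cos_add_two_pi, Real.sin_add_two_pi]
  -- psi (2π) = 2π μ
  have hpsicont : Continuous psi :=
    continuous_iff_continuousAt.2 fun θ => (hpsider θ).continuousAt
  have hpsi2pi : psi (2 * Real.pi) = (2 * Real.pi : ℝ) * mu := by
    have hI := intervalIntegral.integral_eq_sub_of_hasDerivAt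
      (fun θ _ => hpsider θ) (hqp.intervalIntegrable 0 (2 * Real.pi))
    rw [hpsi0, sub_zero] at hI
    have h2 : (2 * (Real.pi : ℂ)) ≠ 0 := by simp [Real.pi_ne_zero]
    rw [hmudef, ← hI]
    push_cast
    rw [← mul_assoc, mul_one_div, div_self h2, one_mul]
  -- psi (θ + 2π) = psi θ + 2π μ
  have hpsi_add : ∀ θ : ℝ, psi (θ + 2 * Real.pi) = psi θ + (2 * Real.pi : ℝ) * mu := by
    have hd : ∀ θ : ℝ, HasDerivAt (fun t => psi (t + 2 * Real.pi) - psi t) 0 θ := by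
      intro θ
      have hid : HasDerivAt (fun t : ℝ => t + 2 * Real.pi) 1 θ := by
        simpa using (hasDerivAt_id θ).add_const (2 * Real.pi)
      have h1 : HasDerivAt (fun t : ℝ => psi (t + 2 * Real.pi))
          (q (θ + 2 * Real.pi) / p (θ + 2 * Real.pi)) θ := by
        have := HasDerivAt.scomp (𝕜 := ℝ) θ (hpsider (θ + 2 * Real.pi)) hid
        simp only [one_smul] at this; exact this
      have h2 := h1.sub (hpsider θ)
      rw [hpp, hqq, sub_self] at h2
      exact h2
    intro θ
    have hconst := is_const_of_deriv_eq_zero (𝕜 := ℝ)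
      (f := fun t => psi (t + 2 * Real.pi) - psi t)
      (fun t => (hd t).differentiableAt) (fun t => (hd t).deriv) θ 0
    have : psi (θ + 2 * Real.pi) - psi θ = psi (2 * Real.pi) := by
      simpa [hpsi0] using hconst
    rw [hpsi2pi] at this
    linear_combination this
  -- exp of the resonance
  obtain ⟨k, hk⟩ := hres
  have hexp1 : Complex.exp (Complex.I * c * ((2 * Real.pi : ℝ) * mu)) = 1 := by
    have : Complex.I * c * ((2 * Real.pi : ℝ) * mu) = (k : ℂ) * (2 * (Real.pi : ℂ) * Complex.I) := by
      rw [← hk]; push_cast; ring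
    rw [this, Complex.exp_int_mul_two_pi_mul_I]
  have hexp2 : Complex.exp (-(Complex.I * c) * ((2 * Real.pi : ℝ) * mu)) = 1 := by
    rw [neg_mul, Complex.exp_neg, hexp1, inv_one]
  -- the integrand g
  set g : ℝ → ℂ := fun s => f₀ s / p s * Complex.exp (-(Complex.I * c) * psi s) with hg
  have hgcont : Continuous g :=
    (hf₀.div hpcont hC2).mul (Complex.continuous_exp.comp (continuous_const.mul hpsicont))
  have hgper : Function.Periodic g (2 * Real.pi) := by
    intro s
    simp only [hg]
    rw [hf₀per s, hpp s, hpsi_add s, mul_add, Complex.exp_add, hexp2, mul_one]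
  -- F and its derivative
  set F : ℝ → ℂ := fun θ => ∫ s in (0:ℝ)..θ, g s with hF
  have hFd : ∀ θ : ℝ, HasDerivAt F (g θ) θ := fun θ =>
    (hgcont.integral_hasStrictDerivAt 0 θ).hasDerivAt
  set E : ℝ → ℂ := fun t => Complex.exp (Complex.I * c * psi t) with hE
  have hEd : ∀ θ : ℝ, HasDerivAt E (E θ * (Complex.I * c * (q θ / p θ))) θ := fun θ =>
    ((hpsider θ).const_mul (Complex.I * c)).cexp
  have hvex : v = fun θ => F θ * E θ := funext hv
  have hkey : ∀ θ : ℝ, g θ * E θ = f₀ θ / p θ := by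
    intro θ
    simp only [hg, hE]
    rw [mul_assoc, ← Complex.exp_add, neg_mul, neg_add_cancel, Complex.exp_zero, mul_one]
  have hint : ∀ t₁ t₂ : ℝ, IntervalIntegrable g MeasureTheory.volume t₁ t₂ := fun t₁ t₂ =>
    hgcont.intervalIntegrable t₁ t₂
  have hFper : ∀ θ : ℝ, F (θ + 2 * Real.pi) = F θ := by
    intro θ
    show (∫ s in (0:ℝ)..(θ + 2 * Real.pi), g s) = ∫ s in (0:ℝ)..θ, g s
    rw [← intervalIntegral.integral_add_adjacent_intervals (hint 0 θ) (hint θ (θ + 2 * Real.pi))]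
    have h3 : (∫ s in θ..(θ + 2 * Real.pi), g s) = ∫ s in (0:ℝ)..(0 + 2 * Real.pi), g s :=
      hgper.intervalIntegral_add_eq θ 0
    rw [h3, zero_add, hcompat, add_zero]
  have hEper : ∀ θ : ℝ, E (θ + 2 * Real.pi) = E θ := by
    intro θ
    show Complex.exp _ = Complex.exp _
    rw [hpsi_add, mul_add, Complex.exp_add, hexp1, mul_one]
  clear_value c g F E
  have hvθ : ∀ θ : ℝ, v θ = F θ * E θ := fun θ => congrFun hvex θ
  have hvd : ∀ θ : ℝ, HasDerivAt v
      (f₀ θ / p θ + Complex.I * c * (q θ / p θ) * v θ) θ := by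
    intro θ
    have h2 := (hFd θ).mul (hEd θ)
    change HasDerivAt (fun θ => F θ * E θ) _ θ at h2
    rw [← hvex] at h2
    convert h2 using 1
    rw [← hkey θ, hvθ θ]
    ring
  have hvcont : Continuous v :=
    continuous_iff_continuousAt.2 fun θ => (hvd θ).continuousAt
  -- the ODE
  have hode : ∀ θ : ℝ, p θ * deriv v θ - Complex.I * c * q θ * v θ = f₀ θ := by
    intro θ
    rw [(hvd θ).deriv]
    field_simp [hC2 θ]
    ring
  -- periodicity of v
  have hint : ∀ t₁ t₂ : ℝ, IntervalIntegrable g MeasureTheory.volume t₁ t₂ := fun t₁ t₂ =>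
    hgcont.intervalIntegrable t₁ t₂
  have hvper : Function.Periodic v (2 * Real.pi) := by
    intro θ
    rw [hvθ, hvθ, hFper, hEper]
  -- C¹
  have hC1v : ContDiff ℝ 1 v := by
    rw [contDiff_one_iff_deriv]
    refine ⟨fun θ => (hvd θ).differentiableAt, ?_⟩
    have : deriv v = fun θ => f₀ θ / p θ + Complex.I * c * (q θ / p θ) * v θ :=
      funext fun θ => (hvd θ).deriv
    rw [this]
    exact (hf₀.div hpcont hC2).add ((continuous_const.mul hqp).mul hvcont)
  refine ⟨hvper, hC1v, hode, ?_⟩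
  intro z hz
  -- polar coordinates of z
  set w : ℂ := (z.1 : ℂ) + (z.2 : ℂ) * Complex.I with hwdef
  have hwre : w.re = z.1 := by simp [hwdef]
  have hwim : w.im = z.2 := by simp [hwdef]
  have hw : w ≠ 0 := by
    intro h
    apply hz
    have h1 : z.1 = 0 := by rw [← hwre, h]; simp
    have h2 : z.2 = 0 := by rw [← hwim, h]; simp
    exact Prod.ext h1 h2
  set r : ℝ := ‖w‖ with hrdef
  set θ₀ : ℝ := Complex.arg w with hθdef
  have hr : 0 < r := norm_pos_iff.mpr hw
  have hx : z.1 = r * Real.cos θ₀ := by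
    rw [hθdef, Complex.cos_arg hw, hwre, hrdef]
    field_simp
  have hy : z.2 = r * Real.sin θ₀ := by
    rw [hθdef, Complex.sin_arg, hwim, hrdef]
    field_simp
  have hpyth := Real.sin_sq_add_cos_sq θ₀
  -- the local chart functions
  set L1 : (ℝ × ℝ) →L[ℝ] ℝ := ContinuousLinearMap.fst ℝ ℝ ℝ with hL1def
  set L2 : (ℝ × ℝ) →L[ℝ] ℝ := ContinuousLinearMap.snd ℝ ℝ ℝ with hL2def
  set P : ℝ × ℝ → ℝ := fun z' => Real.cos θ₀ * z'.1 + Real.sin θ₀ * z'.2 with hPdef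
  set Q : ℝ × ℝ → ℝ := fun z' => -Real.sin θ₀ * z'.1 + Real.cos θ₀ * z'.2 with hQdef
  set R : ℝ × ℝ → ℝ := fun z' => Real.sqrt (z'.1 ^ 2 + z'.2 ^ 2) with hRdef
  set ang : ℝ × ℝ → ℝ := fun z' => θ₀ + Real.arctan (Q z' / P z') with hangdef
  set U : ℝ × ℝ → ℂ :=
    fun z' => Complex.exp (c * (Real.log (R z') : ℂ)) * v (ang z') with hUdef
  have hP1 : P z = r := by
    simp only [hPdef]; rw [hx, hy]; nlinarith [hpyth]
  have hQ1 : Q z = 0 := by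
    simp only [hQdef]; rw [hx, hy]; ring
  have hsum : z.1 ^ 2 + z.2 ^ 2 = r ^ 2 := by rw [hx, hy]; nlinarith [hpyth]
  have hR1 : R z = r := by
    simp only [hRdef]; rw [hsum, Real.sqrt_sq hr.le]
  have hang1 : ang z = θ₀ := by
    simp only [hangdef]; rw [hQ1, zero_div, Real.arctan_zero, add_zero]
  -- u agrees with U where P > 0
  have key : ∀ z' : ℝ × ℝ, 0 < P z' → u z' = U z' := by
    intro z' hP'
    have hPQ : P z' ^ 2 + Q z' ^ 2 = z'.1 ^ 2 + z'.2 ^ 2 := by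
      simp only [hPdef, hQdef]
      linear_combination (z'.1 ^ 2 + z'.2 ^ 2) * hpyth
    have hsum' : 0 < z'.1 ^ 2 + z'.2 ^ 2 := by nlinarith [sq_nonneg (Q z')]
    have hρ : 0 < R z' := Real.sqrt_pos.2 hsum'
    have hρ2 : R z' ^ 2 = z'.1 ^ 2 + z'.2 ^ 2 := Real.sq_sqrt hsum'.le
    have hsq : Real.sqrt (1 + (Q z' / P z') ^ 2) = R z' / P z' := by
      have h1 : 1 + (Q z' / P z') ^ 2 = (R z' / P z') ^ 2 := by
        field_simp
        rw [hρ2]; linear_combination hPQ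
      rw [h1, Real.sqrt_sq (by positivity)]
    have hcosang : R z' * Real.cos (ang z') = z'.1 := by
      simp only [hangdef]
      rw [Real.cos_add, Real.cos_arctan, Real.sin_arctan, hsq]
      simp only [hPdef, hQdef] at *
      field_simp
      linear_combination z'.1 * hpyth
    have hsinang : R z' * Real.sin (ang z') = z'.2 := by
      simp only [hangdef]
      rw [Real.sin_add, Real.cos_arctan, Real.sin_arctan, hsq]
      simp only [hPdef, hQdef] at *
      field_simp
      linear_combination z'.2 * hpyth
    have hz' : z' = (R z' * Real.cos (ang z'), R z' * Real.sin (ang z')) :=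
      Prod.ext hcosang.symm hsinang.symm
    rw [hUdef]
    calc u z' = u (R z' * Real.cos (ang z'), R z' * Real.sin (ang z')) := by rw [← hz']
    _ = Complex.exp (c * (Real.log (R z') : ℂ)) * v (ang z') := hu (R z') (ang z') hρ
  -- u = U near z
  have hPcont : Continuous P := by
    simp only [hPdef]; fun_prop
  have hSopen : IsOpen {z' : ℝ × ℝ | 0 < P z'} := isOpen_lt continuous_const hPcont
  have hzS : z ∈ {z' : ℝ × ℝ | 0 < P z'} := by
    simp only [Set.mem_setOf_eq, hP1]; exact hr
  have hnear : u =ᶠ[nhds z] U := by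
    filter_upwards [hSopen.mem_nhds hzS] with z' h using key z' h
  -- derivatives of the chart functions
  have hPd : HasFDerivAt P (Real.cos θ₀ • L1 + Real.sin θ₀ • L2) z :=
    (hasFDerivAt_fst.const_mul _).add (hasFDerivAt_snd.const_mul _)
  have hQd : HasFDerivAt Q ((-Real.sin θ₀) • L1 + Real.cos θ₀ • L2) z :=
    (hasFDerivAt_fst.const_mul _).add (hasFDerivAt_snd.const_mul _)
  have hRd : HasFDerivAt R (Real.cos θ₀ • L1 + Real.sin θ₀ • L2) z := by
    have hN : HasFDerivAt (fun z' : ℝ × ℝ => z'.1 ^ 2 + z'.2 ^ 2)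
        ((2 * z.1) • L1 + (2 * z.2) • L2) z := by
      have h1 : HasFDerivAt (fun z' : ℝ × ℝ => z'.1 * z'.1) (z.1 • L1 + z.1 • L1) z :=
        hasFDerivAt_fst.mul hasFDerivAt_fst
      have h2 : HasFDerivAt (fun z' : ℝ × ℝ => z'.2 * z'.2) (z.2 • L2 + z.2 • L2) z :=
        hasFDerivAt_snd.mul hasFDerivAt_snd
      have h3 := h1.add h2
      have h4 : (fun z' : ℝ × ℝ => z'.1 * z'.1 + z'.2 * z'.2) =
          fun z' : ℝ × ℝ => z'.1 ^ 2 + z'.2 ^ 2 := by funext z'; ring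
      change HasFDerivAt (fun z' : ℝ × ℝ => z'.1 * z'.1 + z'.2 * z'.2) _ z at h3
      rw [h4] at h3
      refine h3.congr_fderiv ?_
      refine ContinuousLinearMap.ext fun m => ?_
      simp only [ContinuousLinearMap.add_apply, ContinuousLinearMap.smul_apply, smul_eq_mul]
      ring
    have hs : HasDerivAt Real.sqrt (1 / (2 * r)) (z.1 ^ 2 + z.2 ^ 2) := by
      have h0 : z.1 ^ 2 + z.2 ^ 2 ≠ 0 := by rw [hsum]; positivity
      have := Real.hasDerivAt_sqrt h0
      rw [hsum, Real.sqrt_sq hr.le] at this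
      rwa [← hsum] at this
    have h5 : HasFDerivAt R ((1 / (2 * r)) • ((2 * z.1) • L1 + (2 * z.2) • L2)) z :=
      hs.comp_hasFDerivAt z hN
    convert h5 using 1
    refine ContinuousLinearMap.ext fun m => ?_
    simp only [ContinuousLinearMap.add_apply, ContinuousLinearMap.smul_apply, smul_eq_mul]
    rw [hx, hy]
    field_simp
  have hangd : HasFDerivAt ang ((-Real.sin θ₀ / r) • L1 + (Real.cos θ₀ / r) • L2) z := by
    have hinv : HasDerivAt (fun t : ℝ => t⁻¹) (-(r ^ 2)⁻¹) (P z) := by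
      rw [hP1]; exact hasDerivAt_inv hr.ne'
    have hPinv : HasFDerivAt (fun z' => (P z')⁻¹)
        ((-(r ^ 2)⁻¹) • (Real.cos θ₀ • L1 + Real.sin θ₀ • L2)) z :=
      hinv.comp_hasFDerivAt z hPd
    have ht : HasFDerivAt (fun z' => Q z' / P z')
        (Q z • ((-(r ^ 2)⁻¹) • (Real.cos θ₀ • L1 + Real.sin θ₀ • L2)) +
          (P z)⁻¹ • ((-Real.sin θ₀) • L1 + Real.cos θ₀ • L2)) z := by
      have := hQd.mul hPinv
      rw [show (fun z' => Q z' / P z') = fun z' => Q z' * (P z')⁻¹ from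
        funext fun _ => div_eq_mul_inv _ _]
      exact this
    have harc : HasDerivAt Real.arctan 1 (Q z / P z) := by
      rw [hQ1, zero_div]
      simpa using Real.hasDerivAt_arctan 0
    have h6 := (harc.comp_hasFDerivAt z ht).const_add θ₀
    refine h6.congr_fderiv ?_
    refine ContinuousLinearMap.ext fun m => ?_
    simp only [ContinuousLinearMap.add_apply, ContinuousLinearMap.smul_apply, smul_eq_mul,
      ContinuousLinearMap.one_apply, one_smul, hQ1, hP1]
    field_simp
    ring
  -- one-variable derivative of the radial factor
  have hφ : HasDerivAt (fun t : ℝ => Complex.exp (c * (Real.log t : ℂ)))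
      (Complex.exp (c * (Real.log r : ℂ)) * c / r) r := by
    have hlog := Real.hasDerivAt_log hr.ne'
    have hlogC := hlog.ofReal_comp
    have h7 := (hlogC.const_mul c).cexp
    convert h7 using 1
    push_cast
    ring
  -- assemble the derivative of U
  have hU1 : HasFDerivAt (fun z' => Complex.exp (c * (Real.log (R z') : ℂ)))
      ((ContinuousLinearMap.smulRight (1 : ℝ →L[ℝ] ℝ)
          (Complex.exp (c * (Real.log r : ℂ)) * c / r)).comp
        (Real.cos θ₀ • L1 + Real.sin θ₀ • L2)) z := by
    have hφ' : HasFDerivAt (fun t : ℝ => Complex.exp (c * (Real.log t : ℂ)))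
        (ContinuousLinearMap.smulRight (1 : ℝ →L[ℝ] ℝ)
          (Complex.exp (c * (Real.log r : ℂ)) * c / r)) (R z) := by
      rw [hR1]; exact hφ.hasFDerivAt
    exact hφ'.comp z hRd
  have hU2 : HasFDerivAt (fun z' => v (ang z'))
      ((ContinuousLinearMap.smulRight (1 : ℝ →L[ℝ] ℝ) (deriv v θ₀)).comp
        ((-Real.sin θ₀ / r) • L1 + (Real.cos θ₀ / r) • L2)) z := by
    have hvD : HasFDerivAt v
        (ContinuousLinearMap.smulRight (1 : ℝ →L[ℝ] ℝ) (deriv v θ₀)) (ang z) := by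
      rw [hang1]; exact ((hvd θ₀).differentiableAt.hasDerivAt).hasFDerivAt
    exact hvD.comp z hangd
  have hUd := hU1.mul hU2
  have hud : HasFDerivAt u _ z := hUd.congr_of_eventuallyEq hnear
  rw [hud.fderiv]
  -- polar facts for A, B, f at z
  have hzpair : z = (r * Real.cos θ₀, r * Real.sin θ₀) := Prod.ext hx hy
  have hrC : (r : ℂ) = Complex.exp ((Real.log r : ℝ) : ℂ) := by
    rw [← Complex.ofReal_exp, Real.exp_log hr]
  have hrne : (r : ℂ) ≠ 0 := Complex.ofReal_ne_zero.2 hr.ne'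
  have hcpow : ((r : ℂ)) ^ lam = Complex.exp (lam * (Real.log r : ℂ)) := by
    rw [Complex.cpow_def_of_ne_zero hrne, ← Complex.ofReal_log hr.le, mul_comm]
  have hsmul : ((r * Real.cos θ₀, r * Real.sin θ₀) : ℝ × ℝ) =
      r • ((Real.cos θ₀, Real.sin θ₀) : ℝ × ℝ) := by
    simp [Prod.smul_def]
  have hAz : A z = Complex.exp (lam * (Real.log r : ℂ)) * a θ₀ := by
    rw [hzpair, hsmul, hAh r hr _, hcpow, ← ha]
  have hBz : B z = Complex.exp (lam * (Real.log r : ℂ)) * b θ₀ := by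
    rw [hzpair, hsmul, hBh r hr _, hcpow, ← hb]
  have hfz : f z = Complex.exp (sig * (Real.log r : ℂ)) * f₀ θ₀ := by
    rw [hzpair]; exact hf r θ₀ hr
  have hsplit : Complex.exp (lam * (Real.log r : ℂ)) * Complex.exp (c * (Real.log r : ℂ)) =
      Complex.exp (sig * (Real.log r : ℂ)) * r := by
    rw [hrC, ← Complex.exp_add, ← Complex.exp_add]
    congr 1
    rw [hc]; ring
  have hce : Complex.exp (c * (Real.log r : ℂ)) =
      Complex.exp (sig * (Real.log r : ℂ)) * r / Complex.exp (lam * (Real.log r : ℂ)) := by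
    rw [eq_div_iff (Complex.exp_ne_zero _)]
    linear_combination hsplit
  have hode3 : (b θ₀ * (Real.cos θ₀ : ℂ) - a θ₀ * (Real.sin θ₀ : ℂ)) * deriv v θ₀ +
      c * (a θ₀ * (Real.cos θ₀ : ℂ) + b θ₀ * (Real.sin θ₀ : ℂ)) * v θ₀ = f₀ θ₀ := by
    have h := hode θ₀
    rw [hpdef θ₀, hqdef θ₀] at h
    linear_combination h + c * (a θ₀ * (Real.cos θ₀ : ℂ) + b θ₀ * (Real.sin θ₀ : ℂ)) *
      v θ₀ * Complex.I_sq
  -- evaluate the derivative in the two directions and conclude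
  simp only [ContinuousLinearMap.add_apply, ContinuousLinearMap.smul_apply,
    ContinuousLinearMap.comp_apply, ContinuousLinearMap.smulRight_apply,
    ContinuousLinearMap.one_apply, hL1def, hL2def, ContinuousLinearMap.coe_fst',
    ContinuousLinearMap.coe_snd', hR1, hang1, smul_eq_mul, Complex.real_smul]
  rw [hAz, hBz, hfz, ← hode3, hce]
  push_cast
  field_simp [hrne, Complex.exp_ne_zero]
  ring
end

section
/- Let λ ∈ ℂ with Re λ > 1, let P be a nonnegative integer, and set μ = P/(λ+1). Then the pair (μ,λ) is resonant if and only if P = 0 or λ ∈ ℚ (i.e. λ is a rational real number, necessarily > 1); and in that case (μ,λ) has infinitely many resonant integers. -/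
/-- The pair (μ,λ) is resonant if μλ = μl + k for some integers l ≥ 1, k. -/
def IsResonant (mu lam : ℂ) : Prop :=
  ∃ l : ℤ, 1 ≤ l ∧ ∃ k : ℤ, mu * lam = mu * l + k

/-- The set 𝕁(μ,λ) of resonant integers for the pair (μ,λ). -/
def resonantSet (mu lam : ℂ) : Set ℤ :=
  {l : ℤ | 1 ≤ l ∧ ∃ k : ℤ, mu * lam = mu * l + k}

/-- key computation: for λ = a/b rational, m any integer, the pair works. -/
lemma aux_eq (lam : ℂ) (h0 : lam + 1 ≠ 0) (P : ℕ) (a b : ℤ) (hb : (b : ℂ) ≠ 0)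
    (ha : (a : ℂ) = lam * b) (m : ℤ) :
    (P : ℂ) / (lam + 1) * lam
      = (P : ℂ) / (lam + 1) * ((m * (a + b) - 1 : ℤ) : ℂ)
        + ((P * (1 - m * b) : ℤ) : ℂ) := by
  field_simp
  push_cast
  linear_combination (-(P : ℂ) * m) * ha

/-- For λ ∈ ℂ with Re λ > 1, P a nonnegative integer and μ = P/(λ+1):
the pair (μ,λ) is resonant iff P = 0 or λ is a rational (real) number, and in
that case there are infinitely many resonant integers. -/
theorem stmt_13 (lam : ℂ) (hlam : 1 < lam.re) (P : ℕ) (mu : ℂ)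
    (hmu : mu = (P : ℂ) / (lam + 1)) :
    (IsResonant mu lam ↔ (P = 0 ∨ ∃ x : ℚ, lam = (x : ℂ))) ∧
    (IsResonant mu lam → (resonantSet mu lam).Infinite) := by

  have h0 : lam + 1 ≠ 0 := by
    intro h
    have := congrArg Complex.re h
    simp [Complex.add_re] at this
    linarith
  -- forward direction
  have hfwd : IsResonant mu lam → (P = 0 ∨ ∃ x : ℚ, lam = (x : ℂ)) := by
    rintro ⟨l, hl, k, hk⟩
    by_cases hP : P = 0
    · exact Or.inl hP
    right
    rw [hmu] at hk
    have hk' : (P : ℂ) * lam = P * l + k * (lam + 1) := by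
      field_simp at hk
      linear_combination hk
    have hPk : (P : ℂ) ≠ k := by
      intro h
      have h2 : (P : ℂ) * (l + 1) = 0 := by
        linear_combination -hk' + (1 + lam) * h
      rcases mul_eq_zero.mp h2 with h3 | h3
      · exact hP (by exact_mod_cast h3)
      · have h4 : ((l + 1 : ℤ) : ℂ) = 0 := by push_cast; linear_combination h3
        have : l + 1 = 0 := by exact_mod_cast h4
        omega
    have hden : ((P : ℤ) - k : ℤ) ≠ 0 := by
      intro h
      apply hPk
      have : (((P : ℤ) - k : ℤ) : ℂ) = 0 := by rw [h]; simp
      push_cast at this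
      linear_combination this
    refine ⟨((P : ℤ) * l + k : ℚ) / (((P : ℤ) - k : ℤ) : ℚ), ?_⟩
    have hdenC : (((P : ℤ) - k : ℤ) : ℂ) ≠ 0 := by exact_mod_cast hden
    have hcast : ((((P : ℤ) * l + k : ℚ) / (((P : ℤ) - k : ℤ) : ℚ) : ℚ) : ℂ)
        = (((P : ℤ) * l + k : ℤ) : ℂ) / (((P : ℤ) - k : ℤ) : ℂ) := by
      push_cast
      ring
    rw [hcast]
    rw [eq_div_iff hdenC]
    push_cast
    linear_combination hk'
  refine ⟨⟨hfwd, ?_⟩, ?_⟩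
  · -- backward direction
    rintro (hP | ⟨x, hx⟩)
    · exact ⟨1, le_refl 1, 0, by simp [hmu, hP]⟩
    · have hx1 : (1 : ℚ) < x := by
        have : (x : ℂ).re = (x : ℝ) := by simp
        rw [hx, this] at hlam
        exact_mod_cast hlam
      have hb : ((x.den : ℤ) : ℂ) ≠ 0 := by
        simp [x.den_nz]
      have hq : (x.num : ℚ) = x * x.den := by
        have hden : (x.den : ℚ) ≠ 0 := by exact_mod_cast x.den_nz
        have h := Rat.num_div_den x
        rw [div_eq_iff hden] at h
        exact h
      have ha : ((x.num : ℤ) : ℂ) = lam * ((x.den : ℤ) : ℂ) := by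
        rw [hx]
        exact_mod_cast congrArg (fun q : ℚ => (q : ℂ)) hq
      have hsum : 2 ≤ x.num + (x.den : ℤ) := by
        have h1 : (1 : ℤ) ≤ x.den := by exact_mod_cast x.pos
        have h2 : (1 : ℤ) ≤ x.num := by
          have : 0 < x := lt_trans zero_lt_one hx1
          exact Rat.num_pos.mpr this
        omega
      refine ⟨1 * (x.num + (x.den : ℤ)) - 1, by omega, P * (1 - 1 * (x.den : ℤ)), ?_⟩
      have := aux_eq lam h0 P x.num (x.den : ℤ) hb ha 1
      rw [hmu]
      push_cast at this ⊢
      linear_combination this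
  · -- infinitude
    intro hres
    rcases hfwd hres with hP | ⟨x, hx⟩
    · apply Set.infinite_of_injective_forall_mem
        (f := fun n : ℕ => (n : ℤ) + 1)
      · intro a b h
        simpa using h
      · intro n
        refine ⟨by omega, 0, by simp [hmu, hP]⟩
    · have hx1 : (1 : ℚ) < x := by
        have : (x : ℂ).re = (x : ℝ) := by simp
        rw [hx, this] at hlam
        exact_mod_cast hlam
      have hb : ((x.den : ℤ) : ℂ) ≠ 0 := by
        simp [x.den_nz]
      have hq : (x.num : ℚ) = x * x.den := by
        have hden : (x.den : ℚ) ≠ 0 := by exact_mod_cast x.den_nz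
        have h := Rat.num_div_den x
        rw [div_eq_iff hden] at h
        exact h
      have ha : ((x.num : ℤ) : ℂ) = lam * ((x.den : ℤ) : ℂ) := by
        rw [hx]
        exact_mod_cast congrArg (fun q : ℚ => (q : ℂ)) hq
      have hsum : 2 ≤ x.num + (x.den : ℤ) := by
        have h1 : (1 : ℤ) ≤ x.den := by exact_mod_cast x.pos
        have h2 : (1 : ℤ) ≤ x.num := by
          have : 0 < x := lt_trans zero_lt_one hx1
          exact Rat.num_pos.mpr this
        omega
      apply Set.infinite_of_injective_forall_mem
        (f := fun n : ℕ => ((n : ℤ) + 1) * (x.num + (x.den : ℤ)) - 1)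
      · intro n m h
        simp only at h
        have : ((n : ℤ) + 1) * (x.num + (x.den : ℤ)) = ((m : ℤ) + 1) * (x.num + (x.den : ℤ)) := by omega
        have := mul_right_cancel₀ (by omega : x.num + (x.den : ℤ) ≠ 0) this
        omega
      · intro n
        refine ⟨?_, P * (1 - ((n : ℤ) + 1) * (x.den : ℤ)), ?_⟩
        · nlinarith [Int.ofNat_nonneg n]
        · have := aux_eq lam h0 P x.num (x.den : ℤ) hb ha ((n : ℤ) + 1)
          rw [hmu]
          push_cast at this ⊢
          linear_combination this
end

section
/- Let μ, λ ∈ ℂ with μ ≠ 0, Re μ ≥ 0, and (μ,λ) nonresonant. Then: (a) if Im μ ≠ 0, the pair (μ,λ) satisfies condition (DC); (b) if μ is real with μ > 0 and Im λ ≠ 0, the pair (μ,λ) satisfies condition (DC). -/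
/-- Condition (DC): there is C > 0 with |1 − e^{2πiμ(j−λ)}| ≥ C^j for all
integers j ≥ 1. -/
def SatisfiesDC (mu lam : ℂ) : Prop :=
  ∃ C : ℝ, 0 < C ∧ ∀ j : ℕ, 1 ≤ j →
    C ^ j ≤ ‖1 - Complex.exp (2 * Real.pi * Complex.I * mu * ((j : ℂ) - lam))‖

/- A uniform positive lower bound yields (DC). -/
lemma dc_of_unif (mu lam : ℂ) (δ : ℝ) (hδ : 0 < δ)
    (h : ∀ j : ℕ, 1 ≤ j →
      δ ≤ ‖1 - Complex.exp (2 * Real.pi * Complex.I * mu * ((j : ℂ) - lam))‖) :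
    SatisfiesDC mu lam := by
  refine ⟨min δ (1/2), by positivity, fun j hj => ?_⟩
  calc min δ (1/2) ^ j ≤ min δ (1/2) ^ 1 :=
        pow_le_pow_of_le_one (by positivity)
          (le_trans (min_le_right _ _) (by norm_num)) hj
    _ = min δ (1/2) := pow_one _
    _ ≤ δ := min_le_left _ _
    _ ≤ _ := h j hj

/- Min over an initial segment plus a tail bound. -/
lemma min_lemma (f : ℕ → ℝ) (hpos : ∀ j, 1 ≤ j → 0 < f j) (J : ℕ)
    (htail : ∀ j, J ≤ j → (1:ℝ)/2 ≤ f j) :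
    ∃ δ : ℝ, 0 < δ ∧ ∀ j, 1 ≤ j → δ ≤ f j := by
  set S : Finset ℝ := insert ((1:ℝ)/2) ((Finset.Icc 1 J).image f) with hS
  have hne : S.Nonempty := ⟨1/2, Finset.mem_insert_self _ _⟩
  refine ⟨S.min' hne, ?_, ?_⟩
  · have hmem := Finset.min'_mem S hne
    rcases Finset.mem_insert.mp hmem with h | h
    · rw [h]; norm_num
    · rcases Finset.mem_image.mp h with ⟨j, hj, hfj⟩
      rw [← hfj]; exact hpos j (Finset.mem_Icc.mp hj).1
  · intro j hj
    by_cases hjJ : j ≤ J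
    · exact Finset.min'_le S (f j)
        (Finset.mem_insert_of_mem (Finset.mem_image_of_mem f (Finset.mem_Icc.mpr ⟨hj, hjJ⟩)))
    · exact le_trans (Finset.min'_le S _ (Finset.mem_insert_self _ _))
        (htail j (le_of_lt (lt_of_not_ge hjJ)))

/-- For a nonresonant pair (μ,λ) with μ ≠ 0, Re μ ≥ 0:
(a) if Im μ ≠ 0 then (μ,λ) satisfies (DC);
(b) if μ is real with μ > 0 and Im λ ≠ 0 then (μ,λ) satisfies (DC). -/
theorem stmt_14 (mu lam : ℂ) (hmu : mu ≠ 0) (hre : 0 ≤ mu.re)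
    (hnr : ¬ IsResonant mu lam) :
    (mu.im ≠ 0 → SatisfiesDC mu lam) ∧
    ((mu.im = 0 ∧ 0 < mu.re ∧ lam.im ≠ 0) → SatisfiesDC mu lam) := by
  set w : ℕ → ℂ := fun j => 2 * Real.pi * Complex.I * mu * ((j : ℂ) - lam) with hw
  set A : ℝ := 2 * Real.pi * (mu.re * lam.im + mu.im * lam.re) with hA
  set B : ℝ := 2 * Real.pi * mu.im with hB
  have h2pi : (2 * (Real.pi : ℂ) * Complex.I) ≠ 0 := by
    simp [Real.pi_ne_zero, Complex.I_ne_zero]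
  -- exp (w j) ≠ 1 for j ≥ 1, by nonresonance
  have hne1 : ∀ j : ℕ, 1 ≤ j → Complex.exp (w j) ≠ 1 := by
    intro j hj hexp
    rw [Complex.exp_eq_one_iff] at hexp
    obtain ⟨n, hn⟩ := hexp
    apply hnr
    refine ⟨(j : ℤ), by exact_mod_cast hj, -n, ?_⟩
    have key : (2 * (Real.pi : ℂ) * Complex.I) * (mu * ((j : ℂ) - lam))
        = (2 * (Real.pi : ℂ) * Complex.I) * n := by
      rw [hw] at hn
      linear_combination hn
    have h3 := mul_left_cancel₀ h2pi key
    push_cast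
    linear_combination -h3
  have hpos : ∀ j : ℕ, 1 ≤ j → 0 < ‖1 - Complex.exp (w j)‖ := by
    intro j hj
    exact norm_pos_iff.mpr (sub_ne_zero.mpr (Ne.symm (hne1 j hj)))
  have habs : ∀ j : ℕ, ‖Complex.exp (w j)‖ = Real.exp (A - B * j) := by
    intro j
    rw [Complex.norm_exp]
    congr 1
    simp [hw, hA, hB, Complex.mul_re, Complex.mul_im, Complex.sub_re, Complex.sub_im]
    ring
  -- lower bounds via triangle inequality
  have hlow1 : ∀ z : ℂ, ‖z‖ ≤ 1/2 → (1:ℝ)/2 ≤ ‖1 - z‖ := by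
    intro z hz
    have := norm_sub_norm_le (1 : ℂ) z
    simp only [norm_one] at this
    linarith
  have hlow2 : ∀ z : ℂ, (2:ℝ) ≤ ‖z‖ → (1:ℝ)/2 ≤ ‖1 - z‖ := by
    intro z hz
    have := norm_sub_norm_le z (1 : ℂ)
    rw [norm_sub_rev] at this
    simp only [norm_one] at this
    linarith
  constructor
  · -- case (a)
    intro him
    have hexp2 : (2:ℝ) ≤ Real.exp 1 := by
      have := Real.add_one_le_exp 1; linarith
    rcases lt_or_gt_of_ne him with hneg | hpos'
    · -- mu.im < 0, so B < 0, modulus grows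
      have hBneg : B < 0 := by
        have := Real.pi_pos
        rw [hB]; nlinarith
      obtain ⟨δ, hδ, hδle⟩ := min_lemma (fun j => ‖1 - Complex.exp (w j)‖) hpos
        ⌈(1 - A) / (-B)⌉₊ (by
          intro j hj
          apply hlow2
          rw [habs]
          have h1 : (1 - A) / (-B) ≤ (⌈(1 - A) / (-B)⌉₊ : ℝ) := Nat.le_ceil _
          have h2 : ((⌈(1 - A) / (-B)⌉₊ : ℕ) : ℝ) ≤ (j : ℝ) := by exact_mod_cast hj
          have h3 : 1 - A ≤ (-B) * j := by
            rw [div_le_iff₀ (by linarith)] at h1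
            nlinarith
          have h4 : (1:ℝ) ≤ A - B * j := by linarith
          have := Real.add_one_le_exp (A - B * j)
          linarith)
      exact dc_of_unif mu lam δ hδ hδle
    · -- mu.im > 0, so B > 0, modulus decays
      have hBpos : 0 < B := by
        have := Real.pi_pos
        rw [hB]; nlinarith
      obtain ⟨δ, hδ, hδle⟩ := min_lemma (fun j => ‖1 - Complex.exp (w j)‖) hpos
        ⌈(A + 1) / B⌉₊ (by
          intro j hj
          apply hlow1
          rw [habs]
          have h1 : (A + 1) / B ≤ (⌈(A + 1) / B⌉₊ : ℝ) := Nat.le_ceil _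
          have h2 : ((⌈(A + 1) / B⌉₊ : ℕ) : ℝ) ≤ (j : ℝ) := by exact_mod_cast hj
          have h3 : A + 1 ≤ B * j := by
            rw [div_le_iff₀ hBpos] at h1
            nlinarith
          have h5 : Real.exp (A - B * j) ≤ Real.exp (-1) :=
            Real.exp_le_exp.mpr (by linarith)
          have h6 : Real.exp (-1) ≤ 1/2 := by
            rw [Real.exp_neg]
            rw [inv_le_comm₀ (Real.exp_pos 1) (by norm_num)]
            norm_num
            linarith
          linarith)
      exact dc_of_unif mu lam δ hδ hδle
  · -- case (b)
    rintro ⟨him, hrepos, hlim⟩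
    have hB0 : B = 0 := by rw [hB, him]; ring
    have hA0 : A ≠ 0 := by
      have hπ := Real.pi_pos
      rcases hlim.lt_or_gt with h | h
      · exact ne_of_lt (by
          rw [hA, him]
          nlinarith [mul_neg_of_pos_of_neg (mul_pos hπ hrepos) h])
      · exact ne_of_gt (by
          rw [hA, him]
          nlinarith [mul_pos (mul_pos hπ hrepos) h])
    have hAne : Real.exp A ≠ 1 := by
      intro h
      exact hA0 (Real.exp_injective (h.trans Real.exp_zero.symm))
    set δ : ℝ := |Real.exp A - 1| with hδdef
    have hδpos : 0 < δ := abs_pos.mpr (sub_ne_zero.mpr hAne)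
    apply dc_of_unif mu lam δ hδpos
    intro j hj
    have h1 : |‖Complex.exp (w j)‖ - ‖(1 : ℂ)‖|
        ≤ ‖Complex.exp (w j) - 1‖ := by
      have := abs_norm_sub_norm_le (Complex.exp (w j)) (1 : ℂ)
      simpa using this
    rw [habs, hB0] at h1
    simp only [norm_one, mul_zero, zero_mul, sub_zero] at h1
    calc δ = |Real.exp A - 1| := rfl
      _ ≤ ‖Complex.exp (w j) - 1‖ := h1
      _ = ‖1 - Complex.exp (w j)‖ := by
          rw [norm_sub_rev]
end
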